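/- arXiv:2103.00341 — 2 statements merged into one kernel-verified Lean document; each statement's English description precedes it below -/
import Mathlib

section
/- A graph G has a perfect m-star matching (i.e., a spanning subgraph each of whose components is a star K_{1,i} with 1 ≤ i ≤ m) if and only if for every independent set S in G, |N_G(S)| ≥ |S|/m. -/
open SimpleGraph

abbrev MycVert (V : Type) : Type := V ⊕ V ⊕ Unit

def mycAdj {V : Type} (G : SimpleGraph V) : MycVert V → MycVert V → Prop
  | Sum.inl a, Sum.inl b => G.Adj a b
  | Sum.inl a, Sum.inr (Sum.inl b) => G.Adj a b
  | Sum.inr (Sum.inl a), Sum.inl b => G.Adj a b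
  | Sum.inr (Sum.inl _), Sum.inr (Sum.inr _) => True
  | Sum.inr (Sum.inr _), Sum.inr (Sum.inl _) => True
  | _, _ => False

/-- The Mycielski graph of `G`: `Sum.inl v` are original vertices, `Sum.inr (Sum.inl v)`
their copies, and `Sum.inr (Sum.inr ())` is the root. -/
def mycielski {V : Type} (G : SimpleGraph V) : SimpleGraph (MycVert V) where
  Adj := mycAdj G
  symm := by
    constructor
    rintro (a | a | a) (b | b | b) h <;>
      first | exact G.symm h | exact G.adj_symm h | trivial | exact h.elim
  loopless := by
    constructor
    rintro (a | a | a) h <;> first | exact G.loopless a h | exact G.irrefl h | exact h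

def IterMycVert (V : Type) : ℕ → Type
  | 0 => V
  | t + 1 => MycVert (IterMycVert V t)

/-- The `t`-th iterated Mycielski graph. -/
def iterMycielski {V : Type} (G : SimpleGraph V) : (t : ℕ) → SimpleGraph (IterMycVert V t)
  | 0 => G
  | t + 1 => mycielski (iterMycielski G t)

instance iterMycVertFintype (V : Type) [Fintype V] : (t : ℕ) → Fintype (IterMycVert V t)
  | 0 => inferInstanceAs (Fintype V)
  | t + 1 => letI := iterMycVertFintype V t
             inferInstanceAs (Fintype (MycVert (IterMycVert V t)))

/-- `f` is an `L(2,1)`-labeling of `G`. -/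
def IsL21Labeling {V : Type} (G : SimpleGraph V) (f : V → ℕ) : Prop :=
  (∀ x y, G.Adj x y → 2 ≤ ((f x : ℤ) - (f y : ℤ)).natAbs) ∧
  (∀ x y, G.dist x y = 2 → f x ≠ f y)

/-- The `L(2,1)`-labeling number `λ(G)`: the least `k` such that `G` has an
`L(2,1)`-labeling with labels in `{0, …, k}`. -/
noncomputable def lambdaNumber {V : Type} (G : SimpleGraph V) : ℕ :=
  sInf {k | ∃ f : V → ℕ, IsL21Labeling G f ∧ ∀ v, f v ≤ k}


/-- `c` describes an `m`-star matching of `G` covering the vertex set `S`: every component is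
a star `K_{1,i}` with `1 ≤ i ≤ m`, where `c v` is the center of the star containing `v`. -/
def IsStarMatching {V : Type} (G : SimpleGraph V) (m : ℕ) (S : Set V) (c : V → V) : Prop :=
  (∀ v ∈ S, c v ∈ S) ∧
  (∀ v ∈ S, c (c v) = c v) ∧
  (∀ v ∈ S, c v ≠ v → G.Adj v (c v)) ∧
  (∀ v ∈ S, c v = v → ∃ w ∈ S, w ≠ v ∧ c w = v) ∧
  (∀ v ∈ S, Set.ncard {w | w ∈ S ∧ w ≠ v ∧ c w = v} ≤ m)

/-- The `m`-star matching number `s_m(G)`: the maximum order of an `m`-star matching of `G`. -/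
noncomputable def starMatchingNumber {V : Type} [Fintype V] (G : SimpleGraph V) (m : ℕ) : ℕ :=
  sSup {k | ∃ S : Set V, ∃ c : V → V, IsStarMatching G m S c ∧ S.ncard = k}

/-- `i_m(G)`: the number of vertices left unmatched by a maximum `m`-star matching of `G`. -/
noncomputable def unmatchedNumber {V : Type} [Fintype V] (G : SimpleGraph V) (m : ℕ) : ℕ :=
  Fintype.card V - starMatchingNumber G m


section StarFactor

open Finset
open scoped Classical

variable {V : Type} (G : SimpleGraph V) (m : ℕ)

/-- A partial star matching structure on a finite set `A`. -/
def PartStar (A : Finset V) (c : V → V) : Prop :=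
  (∀ v, v ∉ A → c v = v) ∧
  (∀ v ∈ A, c v ∈ A) ∧
  (∀ v ∈ A, c (c v) = c v) ∧
  (∀ v ∈ A, c v ≠ v → G.Adj v (c v)) ∧
  (∀ v ∈ A, c v = v → ∃ w ∈ A, w ≠ v ∧ c w = v) ∧
  (∀ v, (A.filter (fun w => c w = v ∧ w ≠ v)).card ≤ m)

/-- Star matching of `A` allowing at most one vertex to be absorbed to external `z`. -/
def AuxOut (A : Finset V) (z : V) (c : V → V) : Prop :=
  (∀ v, v ∉ A → c v = v) ∧
  (∀ v ∈ A, c v ∈ A ∨ c v = z) ∧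
  (∀ v ∈ A, c v ≠ z → c (c v) = c v) ∧
  (∀ v ∈ A, c v ≠ v → G.Adj v (c v)) ∧
  (∀ v ∈ A, c v = v → ∃ w ∈ A, w ≠ v ∧ c w = v) ∧
  (∀ v, (A.filter (fun w => c w = v ∧ w ≠ v)).card ≤ m) ∧
  ((A.filter (fun w => c w = z)).card ≤ 1)

variable {G m}

lemma partStar_empty : PartStar G m ∅ id := by
  refine ⟨fun v _ => rfl, ?_, ?_, ?_, ?_, fun v => by simp⟩ <;> intro v hv <;> simp at hv

lemma auxOut_of_partStar {A : Finset V} {z : V} {c : V → V} (hz : z ∉ A)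
    (h : PartStar G m A c) : AuxOut G m A z c := by
  obtain ⟨h1, h2, h3, h4, h5, h6⟩ := h
  refine ⟨h1, fun v hv => Or.inl (h2 v hv), fun v hv _ => h3 v hv, h4, h5, h6, ?_⟩
  have : A.filter (fun w => c w = z) = ∅ := by
    refine Finset.filter_eq_empty_iff.2 fun w hw => ?_
    intro hcw; exact hz (hcw ▸ h2 w hw)
  simp [this]

lemma partStar_union {A B : Finset V} {cA cB : V → V} (hAB : Disjoint A B)
    (hA : PartStar G m A cA) (hB : PartStar G m B cB) :
    PartStar G m (A ∪ B) (fun v => if v ∈ A then cA v else cB v) := by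
  obtain ⟨a1, a2, a3, a4, a5, a6⟩ := hA
  obtain ⟨b1, b2, b3, b4, b5, b6⟩ := hB
  have hBnA : ∀ v ∈ B, v ∉ A := fun v hv => (Finset.disjoint_right.1 hAB) hv
  refine ⟨?_, ?_, ?_, ?_, ?_, ?_⟩
  · intro v hv
    rw [Finset.mem_union] at hv; push_neg at hv
    simp only [if_neg hv.1]; exact b1 v hv.2
  · intro v hv
    by_cases h : v ∈ A
    · simp only [if_pos h]; exact Finset.mem_union_left _ (a2 v h)
    · simp only [if_neg h]
      exact Finset.mem_union_right _ (b2 v ((Finset.mem_union.1 hv).resolve_left h))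
  · intro v hv
    by_cases h : v ∈ A
    · simp only [if_pos h, if_pos (a2 v h)]; exact a3 v h
    · have hvB := (Finset.mem_union.1 hv).resolve_left h
      simp only [if_neg h, if_neg (hBnA _ (b2 v hvB))]; exact b3 v hvB
  · intro v hv
    by_cases h : v ∈ A
    · simp only [if_pos h]; exact a4 v h
    · have hvB := (Finset.mem_union.1 hv).resolve_left h
      simp only [if_neg h]; exact b4 v hvB
  · intro v hv
    by_cases h : v ∈ A
    · simp only [if_pos h]
      intro hcv
      obtain ⟨w, hw, hwv, hcw⟩ := a5 v h hcv
      exact ⟨w, Finset.mem_union_left _ hw, hwv, by simp only [if_pos hw, hcw]⟩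
    · have hvB := (Finset.mem_union.1 hv).resolve_left h
      simp only [if_neg h]
      intro hcv
      obtain ⟨w, hw, hwv, hcw⟩ := b5 v hvB hcv
      exact ⟨w, Finset.mem_union_right _ hw, hwv, by simp only [if_neg (hBnA w hw), hcw]⟩
  · intro v
    have : ((A ∪ B).filter (fun w => (if w ∈ A then cA w else cB w) = v ∧ w ≠ v))
        ⊆ (A.filter (fun w => cA w = v ∧ w ≠ v)) ∪ (B.filter (fun w => cB w = v ∧ w ≠ v)) := by
      intro w hw
      rw [Finset.mem_filter, Finset.mem_union] at hw
      rcases hw with ⟨hw1 | hw1, hw2⟩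
      · exact Finset.mem_union_left _ (Finset.mem_filter.2 ⟨hw1, by simpa [if_pos hw1] using hw2⟩)
      · have := hBnA w hw1
        exact Finset.mem_union_right _ (Finset.mem_filter.2 ⟨hw1, by simpa [if_neg this] using hw2⟩)
    calc _ ≤ _ := Finset.card_le_card this
    _ ≤ _ + _ := Finset.card_union_le _ _
    _ ≤ m := by
        by_cases h : v ∈ A
        · have hB0 : B.filter (fun w => cB w = v ∧ w ≠ v) = ∅ := by
            refine Finset.filter_eq_empty_iff.2 fun w hw => ?_
            rintro ⟨h1', _⟩; exact hBnA _ (b2 w hw) (h1'.symm ▸ h)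
          simpa [hB0] using a6 v
        · have hA0 : A.filter (fun w => cA w = v ∧ w ≠ v) = ∅ := by
            refine Finset.filter_eq_empty_iff.2 fun w hw => ?_
            rintro ⟨h1', _⟩; exact h (h1' ▸ a2 w hw)
          simpa [hA0] using b6 v

lemma partStar_extendStar {A L : Finset V} {s : V} {c : V → V}
    (haux : AuxOut G m A s c) (hLne : L.Nonempty)
    (hcard : L.card + (A.filter (fun w => c w = s)).card ≤ m)
    (hadj : ∀ u ∈ L, G.Adj u s) (hsA : s ∉ A) (hLA : ∀ u ∈ L, u ∉ A) (hsL : s ∉ L) :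
    PartStar G m (insert s (L ∪ A)) (fun v => if v ∈ L then s else c v) := by
  obtain ⟨h1, h2, h3, h4, h5, h6, h7⟩ := haux
  have hAnL : ∀ v ∈ A, v ∉ L := fun v hv hvL => hLA v hvL hv
  have hcs : c s = s := h1 s hsA
  refine ⟨?_, ?_, ?_, ?_, ?_, ?_⟩
  · intro v hv
    simp only [Finset.mem_insert, Finset.mem_union] at hv; push_neg at hv
    simp only [if_neg hv.2.1]; exact h1 v hv.2.2
  · intro v hv
    simp only [Finset.mem_insert, Finset.mem_union] at hv
    rcases hv with rfl | hv | hv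
    · simp [if_neg hsL, hcs]
    · simp only [if_pos hv]; exact Finset.mem_insert_self _ _
    · simp only [if_neg (hAnL v hv), Finset.mem_insert, Finset.mem_union]
      rcases h2 v hv with h | h
      · exact Or.inr (Or.inr h)
      · exact Or.inl h
  · intro v hv
    simp only [Finset.mem_insert, Finset.mem_union] at hv
    rcases hv with rfl | hv | hv
    · simp [if_neg hsL, hcs]
    · simp [if_pos hv, if_neg hsL, hcs]
    · simp only [if_neg (hAnL v hv)]
      by_cases h : c v = s
      · simp [h, if_neg hsL, hcs]
      · have hcvA : c v ∈ A := (h2 v hv).resolve_right h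
        simp only [if_neg (hAnL _ hcvA)]; exact h3 v hv h
  · intro v hv
    simp only [Finset.mem_insert, Finset.mem_union] at hv
    rcases hv with rfl | hv | hv
    · simp [if_neg hsL, hcs]
    · simp only [if_pos hv]; intro _; exact hadj v hv
    · simp only [if_neg (hAnL v hv)]; exact h4 v hv
  · intro v hv
    simp only [Finset.mem_insert, Finset.mem_union] at hv
    rcases hv with rfl | hv | hv
    · intro _
      obtain ⟨u, hu⟩ := hLne
      exact ⟨u, by simp [Finset.mem_insert, Finset.mem_union, hu],
        fun h => hsL (h ▸ hu), by simp [if_pos hu]⟩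
    · simp only [if_pos hv]
      intro h; exact absurd h.symm (fun h' => hsL (h' ▸ hv))
    · simp only [if_neg (hAnL v hv)]
      intro h
      obtain ⟨w, hw, hwv, hcw⟩ := h5 v hv h
      exact ⟨w, by simp [Finset.mem_insert, Finset.mem_union, hw],
        hwv, by simp [if_neg (hAnL w hw), hcw]⟩
  · intro v
    by_cases hvs : s = v
    · subst hvs
      have hsub : ((insert s (L ∪ A)).filter
          (fun w => (if w ∈ L then s else c w) = s ∧ w ≠ s))
          ⊆ L ∪ A.filter (fun w => c w = s) := by
        intro w hw
        simp only [Finset.mem_filter, Finset.mem_insert, Finset.mem_union] at hw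
        obtain ⟨rfl | hw1 | hw1, hw2, hw3⟩ := hw
        · exact absurd rfl hw3
        · exact Finset.mem_union_left _ hw1
        · refine Finset.mem_union_right _ (Finset.mem_filter.2 ⟨hw1, ?_⟩)
          simpa [if_neg (hAnL w hw1)] using hw2
      calc _ ≤ (L ∪ A.filter (fun w => c w = s)).card := Finset.card_le_card hsub
      _ ≤ L.card + (A.filter (fun w => c w = s)).card := Finset.card_union_le _ _
      _ ≤ m := hcard
    · have hsub : ((insert s (L ∪ A)).filter
          (fun w => (if w ∈ L then s else c w) = v ∧ w ≠ v))
          ⊆ A.filter (fun w => c w = v ∧ w ≠ v) := by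
        intro w hw
        simp only [Finset.mem_filter, Finset.mem_insert, Finset.mem_union] at hw
        obtain ⟨rfl | hw1 | hw1, hw2, hw3⟩ := hw
        · exact absurd (by simpa [if_neg hsL, hcs] using hw2) hvs
        · exact absurd (by simpa [if_pos hw1] using hw2) hvs
        · exact Finset.mem_filter.2 ⟨hw1, by simpa [if_neg (hAnL w hw1)] using hw2, hw3⟩
      exact le_trans (Finset.card_le_card hsub) (h6 v)

lemma auxOut_absorb (hm : 1 ≤ m) {A : Finset V} {z w₀ : V} {c : V → V} (hz : z ∉ A)
    (hw : w₀ ∉ A) (hwz : w₀ ≠ z) (hadj : G.Adj w₀ z) (h : PartStar G m A c) :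
    AuxOut G m (insert w₀ A) z (fun v => if v = w₀ then z else c v) := by
  obtain ⟨h1, h2, h3, h4, h5, h6⟩ := h
  have hAmem : ∀ v ∈ A, v ≠ w₀ := fun v hv h' => hw (h' ▸ hv)
  refine ⟨?_, ?_, ?_, ?_, ?_, ?_, ?_⟩
  · intro v hv
    simp only [Finset.mem_insert] at hv; push_neg at hv
    simp only [if_neg hv.1]; exact h1 v hv.2
  · intro v hv
    rcases Finset.mem_insert.1 hv with rfl | hv
    · simp
    · simp only [if_neg (hAmem v hv)]
      exact Or.inl (Finset.mem_insert_of_mem (h2 v hv))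
  · intro v hv
    rcases Finset.mem_insert.1 hv with rfl | hv
    · simp
    · simp only [if_neg (hAmem v hv)]
      intro _
      have hcvA := h2 v hv
      simp only [if_neg (hAmem _ hcvA)]; exact h3 v hv
  · intro v hv
    rcases Finset.mem_insert.1 hv with rfl | hv
    · simp only [if_pos rfl]; intro _; exact hadj
    · simp only [if_neg (hAmem v hv)]; exact h4 v hv
  · intro v hv
    rcases Finset.mem_insert.1 hv with rfl | hv
    · simp only [if_pos rfl]
      intro h'; exact absurd h'.symm hwz
    · simp only [if_neg (hAmem v hv)]
      intro h'
      obtain ⟨w, hw', hwv, hcw⟩ := h5 v hv h'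
      exact ⟨w, Finset.mem_insert_of_mem hw', hwv, by simp [if_neg (hAmem w hw'), hcw]⟩
  · intro v
    by_cases hvz : z = v
    · subst hvz
      have hsub : ((insert w₀ A).filter
          (fun w => (if w = w₀ then z else c w) = z ∧ w ≠ z)) ⊆ {w₀} := by
        intro w hw
        simp only [Finset.mem_filter, Finset.mem_insert] at hw
        obtain ⟨rfl | hw1, hw2, _⟩ := hw
        · exact Finset.mem_singleton_self _
        · have hcwz : c w = z := by simpa [if_neg (hAmem w hw1)] using hw2
          exact absurd (hcwz ▸ h2 w hw1) hz
      exact le_trans (Finset.card_le_card hsub) (by simpa using hm)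
    · have hsub : ((insert w₀ A).filter
          (fun w => (if w = w₀ then z else c w) = v ∧ w ≠ v))
          ⊆ A.filter (fun w => c w = v ∧ w ≠ v) := by
        intro w hw
        simp only [Finset.mem_filter, Finset.mem_insert] at hw
        obtain ⟨rfl | hw1, hw2, hw3⟩ := hw
        · have : z = v := by simpa using hw2
          exact absurd this hvz
        · exact Finset.mem_filter.2 ⟨hw1, by simpa [if_neg (hAmem w hw1)] using hw2, hw3⟩
      exact le_trans (Finset.card_le_card hsub) (h6 v)
  · have hsub : ((insert w₀ A).filter (fun w => (if w = w₀ then z else c w) = z)) ⊆ {w₀} := by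
      intro w hw
      simp only [Finset.mem_filter, Finset.mem_insert] at hw
      obtain ⟨rfl | hw1, hw2⟩ := hw
      · exact Finset.mem_singleton_self _
      · have hcwz : c w = z := by simpa [if_neg (hAmem w hw1)] using hw2
        exact absurd (hcwz ▸ h2 w hw1) hz
    exact le_trans (Finset.card_le_card hsub) (by simp)

/-- The vertex set of a path with attachments. -/
noncomputable def Aset (j : ℕ) (p : ℕ → V) (U : ℕ → Finset V) : Finset V :=
  (Finset.range j).biUnion (fun i => insert (p i) (U i))

lemma Aset_succ (j : ℕ) (p : ℕ → V) (U : ℕ → Finset V) :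
    Aset (j+1) p U = insert (p 0) (U 0 ∪ Aset j (fun i => p (i+1)) (fun i => U (i+1))) := by
  ext x
  simp only [Aset, Finset.mem_biUnion, Finset.mem_range, Finset.mem_insert, Finset.mem_union]
  constructor
  · rintro ⟨i, hi, hx⟩
    match i, hi, hx with
    | 0, _, hx => rcases hx with h | h; exact Or.inl h; exact Or.inr (Or.inl h)
    | (i+1), hi, hx => exact Or.inr (Or.inr ⟨i, by omega, hx⟩)
  · rintro (h | h | ⟨i, hi, hx⟩)
    · exact ⟨0, by omega, Or.inl h⟩
    · exact ⟨0, by omega, Or.inr h⟩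
    · exact ⟨i+1, by omega, hx⟩

lemma mem_Aset {j : ℕ} {p : ℕ → V} {U : ℕ → Finset V} {x : V} :
    x ∈ Aset j p U ↔ ∃ i < j, x = p i ∨ x ∈ U i := by
  simp [Aset]

lemma pathAux (hm : 2 ≤ m) : ∀ (j : ℕ) (p : ℕ → V) (U : ℕ → Finset V) (z : V),
    (∀ i, i + 1 < j → G.Adj (p i) (p (i+1))) →
    (∀ i < j, ∀ u ∈ U i, G.Adj u (p i)) →
    (∀ i < j, (U i).card + 1 ≤ m) →
    (∀ i < j, ∀ i' < j, i ≠ i' → p i ≠ p i') →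
    (∀ i < j, ∀ i' < j, p i ∉ U i') →
    (∀ i < j, ∀ i' < j, i ≠ i' → Disjoint (U i) (U i')) →
    (0 < j → G.Adj (p 0) z) →
    (∀ i < j, z ≠ p i ∧ z ∉ U i) →
    ∃ c, AuxOut G m (Aset j p U) z c := by
  intro j
  induction j using Nat.strong_induction_on with
  | _ j ih =>
  intro p U z hadjp hadjU hcardU hpinj hpU hUdisj hadj0 hzout
  obtain _ | j := j
  · exact ⟨id, auxOut_of_partStar (by simp [Aset]) partStar_empty⟩
  by_cases hU0 : (U 0).Nonempty
  · obtain ⟨c₁, hc₁⟩ := ih j (by omega) (fun i => p (i+1)) (fun i => U (i+1)) (p 0)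
      (fun i hi => hadjp (i+1) (by omega))
      (fun i hi u hu => hadjU (i+1) (by omega) u hu)
      (fun i hi => hcardU (i+1) (by omega))
      (fun i hi i' hi' hne => hpinj (i+1) (by omega) (i'+1) (by omega) (by omega))
      (fun i hi i' hi' => hpU (i+1) (by omega) (i'+1) (by omega))
      (fun i hi i' hi' hne => hUdisj (i+1) (by omega) (i'+1) (by omega) (by omega))
      (fun _ => (hadjp 0 (by omega)).symm)
      (fun i hi => ⟨(hpinj 0 (by omega) (i+1) (by omega) (by omega)),
        hpU 0 (by omega) (i+1) (by omega)⟩)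
    have hp0A : p 0 ∉ Aset j (fun i => p (i+1)) (fun i => U (i+1)) := by
      rw [mem_Aset]
      rintro ⟨i, hi, h | h⟩
      · exact hpinj 0 (by omega) (i+1) (by omega) (by omega) h
      · exact hpU 0 (by omega) (i+1) (by omega) h
    have hLA : ∀ u ∈ U 0, u ∉ Aset j (fun i => p (i+1)) (fun i => U (i+1)) := by
      intro u hu hmem
      rw [mem_Aset] at hmem
      obtain ⟨i, hi, h | h⟩ := hmem
      · exact hpU (i+1) (by omega) 0 (by omega) (h ▸ hu)
      · exact (Finset.disjoint_left.1
          (hUdisj 0 (by omega) (i+1) (by omega) (by omega))) hu h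
    have hstar := partStar_extendStar (G := G) (m := m) hc₁ hU0
      (by
        have h7 := hc₁.2.2.2.2.2.2
        have := hcardU 0 (by omega)
        omega)
      (fun u hu => hadjU 0 (by omega) u hu) hp0A hLA (hpU 0 (by omega) 0 (by omega))
    rw [Aset_succ]
    refine ⟨fun v => if v ∈ U 0 then p 0 else c₁ v, auxOut_of_partStar ?_ hstar⟩
    simp only [Finset.mem_insert, Finset.mem_union]
    push_neg
    refine ⟨(hzout 0 (by omega)).1, (hzout 0 (by omega)).2, ?_⟩
    rw [mem_Aset]
    rintro ⟨i, hi, h | h⟩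
    · exact (hzout (i+1) (by omega)).1 h
    · exact (hzout (i+1) (by omega)).2 h
  · have hU0e : U 0 = ∅ := Finset.not_nonempty_iff_eq_empty.1 hU0
    obtain _ | j := j
    · have habs := auxOut_absorb (G := G) (m := m) (by omega) (Finset.notMem_empty z)
        (Finset.notMem_empty (p 0)) (Ne.symm (hzout 0 (by omega)).1)
        (hadj0 (by omega)) partStar_empty
      have hset : Aset 1 p U = insert (p 0) (∅ : Finset V) := by
        rw [Aset_succ]; simp [hU0e, Aset]
      refine ⟨fun v => if v = p 0 then z else id v, ?_⟩
      rw [hset]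
      exact habs
    · -- two or more vertices, U 0 = ∅
      obtain ⟨c₁, hc₁⟩ := ih j (by omega) (fun i => p (i+2)) (fun i => U (i+2)) (p 1)
        (fun i hi => hadjp (i+2) (by omega))
        (fun i hi u hu => hadjU (i+2) (by omega) u hu)
        (fun i hi => hcardU (i+2) (by omega))
        (fun i hi i' hi' hne => hpinj (i+2) (by omega) (i'+2) (by omega) (by omega))
        (fun i hi i' hi' => hpU (i+2) (by omega) (i'+2) (by omega))
        (fun i hi i' hi' hne => hUdisj (i+2) (by omega) (i'+2) (by omega) (by omega))
        (fun _ => (hadjp 1 (by omega)).symm)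
        (fun i hi => ⟨(hpinj 1 (by omega) (i+2) (by omega) (by omega)),
          hpU 1 (by omega) (i+2) (by omega)⟩)
      have hp1A : p 1 ∉ Aset j (fun i => p (i+2)) (fun i => U (i+2)) := by
        rw [mem_Aset]
        rintro ⟨i, hi, h | h⟩
        · exact hpinj 1 (by omega) (i+2) (by omega) (by omega) h
        · exact hpU 1 (by omega) (i+2) (by omega) h
      have hp0A : p 0 ∉ Aset j (fun i => p (i+2)) (fun i => U (i+2)) := by
        rw [mem_Aset]
        rintro ⟨i, hi, h | h⟩
        · exact hpinj 0 (by omega) (i+2) (by omega) (by omega) h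
        · exact hpU 0 (by omega) (i+2) (by omega) h
      have hzA : z ∉ Aset j (fun i => p (i+2)) (fun i => U (i+2)) := by
        rw [mem_Aset]
        rintro ⟨i, hi, h | h⟩
        · exact (hzout (i+2) (by omega)).1 h
        · exact (hzout (i+2) (by omega)).2 h
      by_cases hU1 : (U 1).Nonempty
      · -- absorb p 0 into z, star (p 1; U 1)
        have hLA1 : ∀ u ∈ U 1, u ∉ Aset j (fun i => p (i+2)) (fun i => U (i+2)) := by
          intro u hu hmem
          rw [mem_Aset] at hmem
          obtain ⟨i, hi, h | h⟩ := hmem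
          · exact hpU (i+2) (by omega) 1 (by omega) (h ▸ hu)
          · exact (Finset.disjoint_left.1
              (hUdisj 1 (by omega) (i+2) (by omega) (by omega))) hu h
        have hstar := partStar_extendStar (G := G) (m := m) hc₁ hU1
          (by
            have h7 := hc₁.2.2.2.2.2.2
            have := hcardU 1 (by omega)
            omega)
          (fun u hu => hadjU 1 (by omega) u hu) hp1A hLA1 (hpU 1 (by omega) 1 (by omega))
        set B := insert (p 1) (U 1 ∪ Aset j (fun i => p (i+2)) (fun i => U (i+2))) with hB
        have hzB : z ∉ B := by
          simp only [hB, Finset.mem_insert, Finset.mem_union]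
          push_neg
          exact ⟨(hzout 1 (by omega)).1, (hzout 1 (by omega)).2, hzA⟩
        have hp0B : p 0 ∉ B := by
          simp only [hB, Finset.mem_insert, Finset.mem_union]
          push_neg
          exact ⟨hpinj 0 (by omega) 1 (by omega) (by omega),
            hpU 0 (by omega) 1 (by omega), hp0A⟩
        have habs := auxOut_absorb (G := G) (m := m) (by omega) hzB hp0B
          (Ne.symm (hzout 0 (by omega)).1) (hadj0 (by omega)) hstar
        have hset : Aset (j+2) p U = insert (p 0) B := by
          rw [Aset_succ, Aset_succ, hU0e]
          simp [hB]
        refine ⟨fun v => if v = p 0 then z else (fun v => if v ∈ U 1 then p 1 else c₁ v) v, ?_⟩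
        rw [hset]
        exact habs
      · have hU1e : U 1 = ∅ := Finset.not_nonempty_iff_eq_empty.1 hU1
        have hLA1 : ∀ u ∈ ({p 0} : Finset V), u ∉ Aset j (fun i => p (i+2)) (fun i => U (i+2)) := by
          intro u hu
          rw [Finset.mem_singleton] at hu
          subst hu
          exact hp0A
        have hstar := partStar_extendStar (G := G) (m := m) hc₁ ⟨p 0, Finset.mem_singleton_self _⟩
          (by
            have h7 := hc₁.2.2.2.2.2.2
            simp only [Finset.card_singleton]
            omega)
          (by
            intro u hu
            rw [Finset.mem_singleton] at hu
            subst hu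
            exact hadjp 0 (by omega))
          hp1A hLA1
          (by
            rw [Finset.mem_singleton]
            exact hpinj 1 (by omega) 0 (by omega) (by omega))
        refine ⟨fun v => if v ∈ ({p 0} : Finset V) then p 1 else c₁ v, auxOut_of_partStar ?_ ?_⟩
        · rw [Aset_succ, Aset_succ, hU0e, hU1e]
          simp only [Finset.mem_insert, Finset.mem_union, Finset.empty_union]
          push_neg
          refine ⟨(hzout 0 (by omega)).1, (hzout 1 (by omega)).1, hzA⟩
        · have hset : Aset (j+2) p U = insert (p 1) ({p 0} ∪ Aset j (fun i => p (i+2)) (fun i => U (i+2))) := by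
            rw [Aset_succ, Aset_succ, hU0e, hU1e]
            ext x
            simp only [Finset.mem_insert, Finset.mem_union, Finset.empty_union,
              Finset.mem_singleton]
            tauto
          rw [hset]
          exact hstar

lemma funcStar (hm : 2 ≤ m) : ∀ (n : ℕ) (S : Finset V) (f : V → V), S.card ≤ n →
    (∀ v ∈ S, f v ∈ S) → (∀ v ∈ S, f v ≠ v) → (∀ v ∈ S, G.Adj v (f v)) →
    (∀ t, (S.filter (fun w => f w = t)).card ≤ m) →
    ∃ c, PartStar G m S c := by
  intro n
  induction n with
  | zero =>
    intro S f hcard _ _ _ _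
    have hS : S = ∅ := Finset.card_eq_zero.1 (Nat.le_zero.1 hcard)
    exact ⟨id, hS ▸ partStar_empty⟩
  | succ n ihn =>
    intro S f hcard hfS hne hadj hfib
    rcases Finset.eq_empty_or_nonempty S with hSe | hSne
    · exact ⟨id, hSe ▸ partStar_empty⟩
    have recurse : ∀ R : Finset V, R ⊆ S → R.Nonempty →
        (∀ v ∈ S, v ∉ R → f v ∉ R) → (∃ c, PartStar G m R c) → ∃ c, PartStar G m S c := by
      rintro R hRS hRne hcl ⟨cR, hcR⟩
      have hcard' : (S \ R).card ≤ n := by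
        have h1 : (S \ R).card = S.card - R.card := Finset.card_sdiff_of_subset hRS
        have h2 : 0 < R.card := Finset.card_pos.2 hRne
        omega
      obtain ⟨cRest, hcRest⟩ := ihn (S \ R) f hcard'
        (fun v hv => by
          rw [Finset.mem_sdiff] at hv ⊢
          exact ⟨hfS v hv.1, hcl v hv.1 hv.2⟩)
        (fun v hv => hne v (Finset.mem_sdiff.1 hv).1)
        (fun v hv => hadj v (Finset.mem_sdiff.1 hv).1)
        (fun t => le_trans
          (Finset.card_le_card (Finset.filter_subset_filter _ Finset.sdiff_subset)) (hfib t))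
      have hun : R ∪ (S \ R) = S := Finset.union_sdiff_of_subset hRS
      have hu := partStar_union Finset.disjoint_sdiff hcR hcRest
      rw [hun] at hu
      exact ⟨_, hu⟩
    have star_alone : ∀ p : V, p ∈ S → ∀ L : Finset V, L.Nonempty → L.card ≤ m →
        (∀ u ∈ L, u ∈ S ∧ f u = p) → p ∉ L →
        ∃ c, PartStar G m (insert p L) c := by
      intro p hpS L hLne hLcard hLmem hpL
      have haux : AuxOut G m ∅ p id :=
        auxOut_of_partStar (Finset.notMem_empty p) partStar_empty
      have hstar := partStar_extendStar (G := G) (m := m) haux hLne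
        (by simpa using hLcard)
        (fun u hu => by
          have := (hLmem u hu).2
          have h' := hadj u (hLmem u hu).1
          rwa [this] at h')
        (Finset.notMem_empty p) (fun u _ => Finset.notMem_empty u) hpL
      rw [Finset.union_empty] at hstar
      exact ⟨_, hstar⟩
    by_cases hcase : ∃ p ∈ S, (S.filter (fun w => f w = p)).Nonempty ∧
        ∀ l ∈ S.filter (fun w => f w = p), ¬(S.filter (fun w => f w = l)).Nonempty
    · -- tree case
      obtain ⟨p, hpS, hpfib, hpleaf⟩ := hcase
      have hpL : p ∉ S.filter (fun w => f w = p) := by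
        rw [Finset.mem_filter]
        rintro ⟨h1, h2⟩
        exact hne p hpS h2
      obtain ⟨c₂, hc₂⟩ := star_alone p hpS _ hpfib (hfib p)
        (fun u hu => by
          rw [Finset.mem_filter] at hu
          exact ⟨hu.1, hu.2⟩) hpL
      refine recurse _ ?_ ⟨p, Finset.mem_insert_self _ _⟩ ?_ ⟨c₂, hc₂⟩
      · intro x hx
        rcases Finset.mem_insert.1 hx with rfl | hx
        · exact hpS
        · exact (Finset.mem_filter.1 hx).1
      · intro v hvS hvR hfvR
        rcases Finset.mem_insert.1 hfvR with h | h
        · exact hvR (Finset.mem_insert_of_mem (Finset.mem_filter.2 ⟨hvS, h⟩))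
        · exact hpleaf (f v) h ⟨v, Finset.mem_filter.2 ⟨hvS, rfl⟩⟩
    · -- cycle case
      push_neg at hcase
      set T : Finset V := S.filter (fun t => (S.filter (fun w => f w = t)).Nonempty) with hT
      have hTS : T ⊆ S := Finset.filter_subset _ _
      have hfT : ∀ v ∈ S, f v ∈ T := by
        intro v hv
        rw [hT, Finset.mem_filter]
        exact ⟨hfS v hv, ⟨v, Finset.mem_filter.2 ⟨hv, rfl⟩⟩⟩
      have hTf : ∀ t ∈ T, f t ∈ T := fun t ht => hfT t (hTS ht)
      have hsurj : ∀ t ∈ T, ∃ l ∈ T, f l = t := by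
        intro t ht
        rw [hT, Finset.mem_filter] at ht
        obtain ⟨l, hl1, hl2⟩ := hcase t ht.1 ht.2
        rw [Finset.mem_filter] at hl1
        exact ⟨l, Finset.mem_filter.2 ⟨hl1.1, hl2⟩, hl1.2⟩
      have hinj : ∀ a ∈ T, ∀ b ∈ T, f a = f b → a = b := by
        intro a ha b hb hab
        exact Finset.inj_on_of_surj_on_of_card_le (s := T) (t := T) (fun a _ => f a)
          (fun a ha => hTf a ha)
          (fun b hb => by
            obtain ⟨l, hl, hfl⟩ := hsurj b hb
            exact ⟨l, hl, hfl⟩)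
          le_rfl ha hb hab
      have horb : ∀ t ∈ T, ∀ i, f^[i] t ∈ T := by
        intro t ht i
        induction i with
        | zero => simpa using ht
        | succ i ihi => rw [Function.iterate_succ_apply']; exact hTf _ ihi
      -- the component construction
      have hUdisj : ∀ t t' : V, t ≠ t' →
          Disjoint ((S.filter (fun w => f w = t)) \ T) ((S.filter (fun w => f w = t')) \ T) := by
        intro t t' htt'
        rw [Finset.disjoint_left]
        intro u hu hu'
        rw [Finset.mem_sdiff, Finset.mem_filter] at hu hu'
        exact htt' (hu.1.2 ▸ hu'.1.2 ▸ rfl)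
      have hcomp : ∀ t₀ ∈ T, (((S.filter (fun w => f w = t₀)) \ T).Nonempty ∨
          ∀ i, (S.filter (fun w => f w = f^[i] t₀)) \ T = ∅) →
          ∃ C : Finset V, C ⊆ S ∧ C.Nonempty ∧ (∀ v ∈ S, f v ∈ C → v ∈ C) ∧
            ∃ c, PartStar G m C c := by
        intro t₀ ht₀ hdisj
        have ht₀S : t₀ ∈ S := hTS ht₀
        -- periodicity
        have hper : t₀ ∈ Function.periodicPts f := by
          have hmap : ∀ i ∈ Finset.range (T.card + 1), f^[i] t₀ ∈ T :=
            fun i _ => horb t₀ ht₀ i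
          obtain ⟨a, ha, b, hb, hab, heq⟩ :=
            Finset.exists_ne_map_eq_of_card_lt_of_maps_to
              (by rw [Finset.card_range]; omega) hmap
          have hcancel : ∀ a c : ℕ, f^[a] t₀ = f^[a + c] t₀ → f^[c] t₀ = t₀ := by
            intro a
            induction a with
            | zero => intro c h; simpa using h.symm
            | succ a iha =>
              intro c h
              apply iha
              have h1 : f^[a + 1] t₀ = f^[(a + c) + 1] t₀ := by
                rw [show (a + c) + 1 = a + 1 + c by omega]
                exact h
              have h2 : f (f^[a] t₀) = f (f^[a + c] t₀) := by
                rw [← Function.iterate_succ_apply' f a t₀,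
                  ← Function.iterate_succ_apply' f (a + c) t₀]
                exact h1
              exact hinj _ (horb t₀ ht₀ a) _ (horb t₀ ht₀ (a + c)) h2
          rcases Nat.lt_or_ge a b with h | h
          · refine ⟨b - a, by omega, hcancel a (b - a) ?_⟩
            rw [show a + (b - a) = b by omega]
            exact heq
          · have hba : b < a := by omega
            refine ⟨a - b, by omega, hcancel b (a - b) ?_⟩
            rw [show b + (a - b) = a by omega]
            exact heq.symm
        set k := Function.minimalPeriod f t₀ with hkdef
        have hk0 : 0 < k := Function.minimalPeriod_pos_of_mem_periodicPts hper
        have hkk : f^[k] t₀ = t₀ := Function.iterate_minimalPeriod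
        have hk2 : 2 ≤ k := by
          have hk1 : k ≠ 1 := by
            intro h1
            rw [h1, Function.iterate_one] at hkk
            exact hne t₀ ht₀S hkk
          omega
        have hOinj : ∀ i < k, ∀ i' < k, f^[i] t₀ = f^[i'] t₀ → i = i' := by
          intro i hi i' hi' h
          exact Function.iterate_injOn_Iio_minimalPeriod (Set.mem_Iio.2 hi) (Set.mem_Iio.2 hi') h
        have hmod : ∀ i, f^[i % k] t₀ = f^[i] t₀ := fun i =>
          Function.iterate_mod_minimalPeriod_eq
        have hiterT : ∀ i, f^[i] t₀ ∈ T := horb t₀ ht₀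
        have hiterS : ∀ i, f^[i] t₀ ∈ S := fun i => hTS (hiterT i)
        have hpred : ∀ i, f (f^[(i + (k-1)) % k] t₀) = f^[i] t₀ := by
          intro i
          calc f (f^[(i + (k-1)) % k] t₀)
              = f^[(i + (k-1)) % k + 1] t₀ := (Function.iterate_succ_apply' f _ t₀).symm
            _ = f^[((i + (k-1)) % k + 1) % k] t₀ := (hmod _).symm
            _ = f^[(i + (k-1) + 1) % k] t₀ := by rw [Nat.mod_add_mod]
            _ = f^[(i + k) % k] t₀ := by rw [show i + (k-1) + 1 = i + k by omega]
            _ = f^[i % k] t₀ := by rw [Nat.add_mod_right]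
            _ = f^[i] t₀ := hmod i
        set Uf : V → Finset V := fun t => (S.filter (fun w => f w = t)) \ T with hUf
        have hUmem : ∀ t, ∀ u ∈ Uf t, u ∈ S ∧ f u = t ∧ u ∉ T := by
          intro t u hu
          rw [hUf] at hu
          simp only [Finset.mem_sdiff, Finset.mem_filter] at hu
          exact ⟨hu.1.1, hu.1.2, hu.2⟩
        have hUcard : ∀ i, (Uf (f^[i] t₀)).card + 1 ≤ m := by
          intro i
          set pr := f^[(i + (k-1)) % k] t₀ with hprdef
          have hprT : pr ∈ T := hiterT _
          have hprnU : pr ∉ Uf (f^[i] t₀) := fun h => (hUmem _ _ h).2.2 hprT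
          have hsub : insert pr (Uf (f^[i] t₀)) ⊆ S.filter (fun w => f w = f^[i] t₀) := by
            intro x hx
            rcases Finset.mem_insert.1 hx with rfl | hx
            · exact Finset.mem_filter.2 ⟨hTS hprT, hpred i⟩
            · rw [hUf] at hx
              exact (Finset.mem_sdiff.1 hx).1
          have := Finset.card_le_card hsub
          rw [Finset.card_insert_of_notMem hprnU] at this
          have := hfib (f^[i] t₀)
          omega
        set O : Finset V := (Finset.range k).image (fun i => f^[i] t₀) with hO
        set C : Finset V := O.biUnion (fun t => insert t (Uf t)) with hC
        have hmemC : ∀ x, x ∈ C ↔ ∃ i < k, x = f^[i] t₀ ∨ x ∈ Uf (f^[i] t₀) := by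
          intro x
          rw [hC, Finset.mem_biUnion]
          constructor
          · rintro ⟨t, ht, hx⟩
            rw [hO, Finset.mem_image] at ht
            obtain ⟨i, hi, rfl⟩ := ht
            rcases Finset.mem_insert.1 hx with rfl | hx
            · exact ⟨i, Finset.mem_range.1 hi, Or.inl rfl⟩
            · exact ⟨i, Finset.mem_range.1 hi, Or.inr hx⟩
          · rintro ⟨i, hi, h | h⟩
            · exact ⟨f^[i] t₀, Finset.mem_image.2 ⟨i, Finset.mem_range.2 hi, rfl⟩,
                h ▸ Finset.mem_insert_self _ _⟩
            · exact ⟨f^[i] t₀, Finset.mem_image.2 ⟨i, Finset.mem_range.2 hi, rfl⟩,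
                Finset.mem_insert_of_mem h⟩
        have hCS : C ⊆ S := by
          intro x hx
          rw [hmemC] at hx
          obtain ⟨i, hi, h | h⟩ := hx
          · exact h ▸ hiterS i
          · exact (hUmem _ _ h).1
        have hclosedC : ∀ v ∈ S, f v ∈ C → v ∈ C := by
          intro v hv hfv
          rw [hmemC] at hfv
          obtain ⟨i, hi, h | h⟩ := hfv
          · by_cases hvT : v ∈ T
            · have h1 : f v = f (f^[(i + (k-1)) % k] t₀) := by rw [hpred i, h]
              have h2 : v = f^[(i + (k-1)) % k] t₀ := hinj _ hvT _ (hiterT _) h1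
              rw [hmemC]
              exact ⟨(i + (k-1)) % k, Nat.mod_lt _ hk0, Or.inl h2⟩
            · rw [hmemC]
              refine ⟨i, hi, Or.inr ?_⟩
              rw [hUf]
              exact Finset.mem_sdiff.2 ⟨Finset.mem_filter.2 ⟨hv, h⟩, hvT⟩
          · exact absurd (hfT v hv) (hUmem _ _ h).2.2
        refine ⟨C, hCS, ⟨t₀, (hmemC t₀).2 ⟨0, by omega, Or.inl (by simp)⟩⟩, hclosedC, ?_⟩
        -- now build the star matching on C
        rcases hdisj with hUne0 | hUall0
        · -- case A : Uf t₀ nonempty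
          have hUne : (Uf t₀).Nonempty := by simp only [hUf]; exact hUne0
          obtain ⟨c₁, hc₁⟩ := pathAux (G := G) hm (k - 1) (fun i => f^[i+1] t₀)
            (fun i => Uf (f^[i+1] t₀)) t₀
            (fun i hi => by
              have h' := hadj _ (hiterS (i+1))
              rwa [← Function.iterate_succ_apply' f (i+1) t₀] at h')
            (fun i hi u hu => by
              have h' := hadj u (hUmem _ _ hu).1
              rwa [(hUmem _ _ hu).2.1] at h')
            (fun i hi => hUcard (i+1))
            (fun i hi i' hi' hii' h =>
              hii' (by
                have := hOinj (i+1) (by omega) (i'+1) (by omega) h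
                omega))
            (fun i hi i' hi' h => (hUmem _ _ h).2.2 (hiterT (i+1)))
            (fun i hi i' hi' hii' => hUdisj _ _ (fun h =>
              hii' (by
                have := hOinj (i+1) (by omega) (i'+1) (by omega) h
                omega)))
            (fun _ => by simpa using (hadj t₀ ht₀S).symm)
            (fun i hi => ⟨fun h => by
                have := hOinj 0 (by omega) (i+1) (by omega) (by simpa using h)
                omega,
              fun h => (hUmem _ _ h).2.2 ht₀⟩)
          have ht₀A : t₀ ∉ Aset (k-1) (fun i => f^[i+1] t₀) (fun i => Uf (f^[i+1] t₀)) := by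
            rw [mem_Aset]
            rintro ⟨i, hi, h | h⟩
            · have := hOinj 0 (by omega) (i+1) (by omega) (by simpa using h)
              omega
            · exact (hUmem _ _ h).2.2 ht₀
          have hstar := partStar_extendStar (G := G) (m := m) hc₁ hUne
            (by
              have h7 := hc₁.2.2.2.2.2.2
              have h8 := hUcard 0
              simp only [Function.iterate_zero_apply] at h8
              omega)
            (fun u hu => by
              have h' := hadj u (hUmem _ _ hu).1
              rwa [(hUmem _ _ hu).2.1] at h')
            ht₀A
            (by
              intro u hu
              rw [mem_Aset]
              rintro ⟨i, hi, h | h⟩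
              · exact (hUmem _ _ hu).2.2 (h ▸ hiterT (i+1))
              · exact Finset.disjoint_left.1 (hUdisj t₀ _ (fun heq => by
                  have := hOinj 0 (by omega) (i+1) (by omega) (by simpa using heq)
                  omega)) hu h)
            (fun h => (hUmem _ _ h).2.2 ht₀)
          have hseteq : insert t₀ (Uf t₀ ∪
              Aset (k-1) (fun i => f^[i+1] t₀) (fun i => Uf (f^[i+1] t₀))) = C := by
            ext x
            rw [hmemC]
            simp only [Finset.mem_insert, Finset.mem_union, mem_Aset]
            constructor
            · rintro (rfl | hx | ⟨i, hi, h | h⟩)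
              · exact ⟨0, by omega, Or.inl (by simp)⟩
              · exact ⟨0, by omega, Or.inr (by simpa using hx)⟩
              · exact ⟨i+1, by omega, Or.inl h⟩
              · exact ⟨i+1, by omega, Or.inr h⟩
            · rintro ⟨i, hi, h | h⟩
              · match i, hi, h with
                | 0, _, h => exact Or.inl (by simpa using h)
                | (i+1), hi, h => exact Or.inr (Or.inr ⟨i, by omega, Or.inl h⟩)
              · match i, hi, h with
                | 0, _, h => exact Or.inr (Or.inl (by simpa using h))
                | (i+1), hi, h => exact Or.inr (Or.inr ⟨i, by omega, Or.inr h⟩)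
          rw [hseteq] at hstar
          exact ⟨_, hstar⟩
        · -- case B : all orbit attachments empty
          have hUall : ∀ i, Uf (f^[i] t₀) = ∅ := fun i => by
            simp only [hUf]; exact hUall0 i
          obtain ⟨c₁, hc₁⟩ := pathAux (G := G) hm (k - 2) (fun i => f^[i+2] t₀)
            (fun _ => (∅ : Finset V)) (f t₀)
            (fun i hi => by
              have h' := hadj _ (hiterS (i+2))
              rw [← Function.iterate_succ_apply' f (i+2) t₀] at h'
              simpa [show i + 2 + 1 = i + 1 + 2 by omega] using h')
            (fun i hi u hu => absurd hu (Finset.notMem_empty u))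
            (fun i hi => by
              show (∅ : Finset V).card + 1 ≤ m
              simp only [Finset.card_empty]
              omega)
            (fun i hi i' hi' hii' h =>
              hii' (by
                have := hOinj (i+2) (by omega) (i'+2) (by omega) h
                omega))
            (fun i hi i' hi' => Finset.notMem_empty _)
            (fun i hi i' hi' hii' => Finset.disjoint_empty_left _)
            (fun h0 => by
              show G.Adj (f^[0+2] t₀) (f t₀)
              have h' := hadj _ (hiterS 1)
              rw [Function.iterate_one] at h'
              have h2 : f^[0+2] t₀ = f (f t₀) := by
                rw [show (0:ℕ)+2 = 1+1 from rfl, Function.iterate_succ_apply' f 1 t₀,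
                  Function.iterate_one]
              rw [h2]
              exact h'.symm)
            (fun i hi => ⟨fun h => by
                have h' : f^[1] t₀ = f^[i+2] t₀ := by simpa using h
                have := hOinj 1 (by omega) (i+2) (by omega) h'
                omega,
              Finset.notMem_empty _⟩)
          have hft₀A : f t₀ ∉ Aset (k-2) (fun i => f^[i+2] t₀) (fun _ => (∅ : Finset V)) := by
            rw [mem_Aset]
            rintro ⟨i, hi, h | h⟩
            · have h' : f^[1] t₀ = f^[i+2] t₀ := by simpa using h
              have := hOinj 1 (by omega) (i+2) (by omega) h'
              omega
            · exact Finset.notMem_empty _ h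
          have hstar := partStar_extendStar (G := G) (m := m) hc₁
            ⟨t₀, Finset.mem_singleton_self _⟩
            (by
              have h7 := hc₁.2.2.2.2.2.2
              simp only [Finset.card_singleton]
              omega)
            (by
              intro u hu
              rw [Finset.mem_singleton] at hu
              rw [hu]
              exact hadj t₀ ht₀S)
            hft₀A
            (by
              intro u hu
              rw [Finset.mem_singleton] at hu
              rw [hu, mem_Aset]
              rintro ⟨i, hi, h | h⟩
              · have h' : f^[0] t₀ = f^[i+2] t₀ := by simpa using h
                have := hOinj 0 (by omega) (i+2) (by omega) h'
                omega
              · exact Finset.notMem_empty _ h)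
            (by
              rw [Finset.mem_singleton]
              exact fun h => hne t₀ ht₀S h)
          have hseteq : insert (f t₀) ({t₀} ∪
              Aset (k-2) (fun i => f^[i+2] t₀) (fun _ => (∅ : Finset V))) = C := by
            ext x
            rw [hmemC]
            simp only [Finset.mem_insert, Finset.mem_union, mem_Aset, Finset.mem_singleton]
            constructor
            · rintro (rfl | rfl | ⟨i, hi, h | h⟩)
              · exact ⟨1, by omega, Or.inl (by simp)⟩
              · exact ⟨0, by omega, Or.inl (by simp)⟩
              · exact ⟨i+2, by omega, Or.inl h⟩
              · exact absurd h (Finset.notMem_empty _)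
            · rintro ⟨i, hi, h | h⟩
              · match i, hi, h with
                | 0, _, h => exact Or.inr (Or.inl (by simpa using h))
                | 1, _, h => exact Or.inl (by simpa using h)
                | (i+2), hi, h => exact Or.inr (Or.inr ⟨i, by omega, Or.inl h⟩)
              · exact absurd h (by rw [hUall i]; exact Finset.notMem_empty x)
          rw [hseteq] at hstar
          exact ⟨_, hstar⟩
      -- choose the base point and apply
      obtain ⟨s₀, hs₀⟩ := hSne
      by_cases hex : ∃ i, ((S.filter (fun w => f w = f^[i] (f s₀))) \ T).Nonempty
      · obtain ⟨i, hi⟩ := hex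
        obtain ⟨C, hCS, hCne, hCcl, hc⟩ := hcomp (f^[i] (f s₀))
          (horb (f s₀) (hfT s₀ hs₀) i) (Or.inl hi)
        exact recurse C hCS hCne (fun v hv hvC hfvC => hvC (hCcl v hv hfvC)) hc
      · push_neg at hex
        obtain ⟨C, hCS, hCne, hCcl, hc⟩ := hcomp (f s₀) (hfT s₀ hs₀)
          (Or.inr (fun i => hex i))
        exact recurse C hCS hCne (fun v hv hvC hfvC => hvC (hCcl v hv hfvC)) hc

end StarFactor

/-- A graph `G` has a perfect `m`-star matching iff for every independent set `S` of `G`,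
`|N_G(S)| ≥ |S| / m` (equivalently `|S| ≤ m * |N_G(S)|`). -/
theorem perfect_starMatching_iff {V : Type} [Fintype V] (G : SimpleGraph V) (m : ℕ)
    (hm : 2 ≤ m) :
    (∃ c : V → V, IsStarMatching G m Set.univ c) ↔
      ∀ S : Set V, (∀ x ∈ S, ∀ y ∈ S, ¬G.Adj x y) →
        S.ncard ≤ m * Set.ncard {v | ∃ s ∈ S, G.Adj s v} := by
  classical
  constructor
  · rintro ⟨c, hc1, hc2, hc3, hc4, hc5⟩ S _hindep
    have hleaf : ∀ v, c v = v → ∃ w, w ≠ v ∧ c w = v := by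
      intro v hv
      obtain ⟨w, _, hw⟩ := hc4 v (Set.mem_univ v) hv
      exact ⟨w, hw⟩
    set φ : V → V := fun v => if h : c v = v then (hleaf v h).choose else c v with hφ
    have hφ1 : ∀ v, c v = v → φ v ≠ v ∧ c (φ v) = v := by
      intro v hv
      have : φ v = (hleaf v hv).choose := by rw [hφ]; exact dif_pos hv
      rw [this]
      exact (hleaf v hv).choose_spec
    have hφ2 : ∀ v, c v ≠ v → φ v = c v := by
      intro v hv
      rw [hφ]
      exact dif_neg hv
    have hfib : ∀ v, (Finset.univ.filter (fun w => c w = v ∧ w ≠ v)).card ≤ m := by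
      intro v
      have h5 := hc5 v (Set.mem_univ v)
      have hseteq : {w | w ∈ Set.univ ∧ w ≠ v ∧ c w = v} =
          ↑(Finset.univ.filter (fun w => c w = v ∧ w ≠ v)) := by
        ext w
        simp only [Set.mem_setOf_eq, Finset.coe_filter, Finset.mem_univ, Set.mem_univ,
          true_and, Set.mem_setOf_eq]
        tauto
      rw [hseteq, Set.ncard_coe_finset] at h5
      exact h5
    set Sf : Finset V := (Set.toFinite S).toFinset with hSf
    have hSfmem : ∀ x, x ∈ Sf ↔ x ∈ S := by
      intro x
      rw [hSf, Set.Finite.mem_toFinset]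
    set Nf : Finset V := Finset.univ.filter (fun v => ∃ s ∈ S, G.Adj s v) with hNf
    have hNfmem : ∀ x, x ∈ Nf ↔ ∃ s ∈ S, G.Adj s x := by
      intro x
      rw [hNf, Finset.mem_filter]
      simp
    have hScard : S.ncard = Sf.card := Set.ncard_eq_toFinset_card S (Set.toFinite S)
    have hNcard : Set.ncard {v | ∃ s ∈ S, G.Adj s v} = Nf.card := by
      have : {v | ∃ s ∈ S, G.Adj s v} = ↑Nf := by
        ext x
        rw [Set.mem_setOf_eq, Finset.mem_coe, hNfmem]
      rw [this, Set.ncard_coe_finset]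
    rw [hScard, hNcard]
    have himage : Sf.image φ ⊆ Nf := by
      intro b hb
      rw [Finset.mem_image] at hb
      obtain ⟨s, hs, rfl⟩ := hb
      rw [hSfmem] at hs
      by_cases hcs : c s = s
      · obtain ⟨hw1, hw2⟩ := hφ1 s hcs
        have hadjw : G.Adj (φ s) s := by
          have h3 := hc3 (φ s) (Set.mem_univ _) (by rw [hw2]; exact Ne.symm hw1)
          rwa [hw2] at h3
        rw [hNfmem]
        exact ⟨s, hs, hadjw.symm⟩
      · rw [hφ2 s hcs, hNfmem]
        exact ⟨s, hs, hc3 s (Set.mem_univ _) hcs⟩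
    have hbound : ∀ b ∈ Sf.image φ, (Sf.filter (fun a => φ a = b)).card ≤ m := by
      intro b _
      by_cases hk2 : ∃ s ∈ Sf, φ s = b ∧ c s = s
      · obtain ⟨s', hs', hφs', hcs'⟩ := hk2
        have hcb : c b = s' ∧ b ≠ s' := by
          obtain ⟨hw1, hw2⟩ := hφ1 s' hcs'
          rw [hφs'] at hw1 hw2
          exact ⟨hw2, hw1⟩
        have hsub : Sf.filter (fun a => φ a = b) ⊆ {s'} := by
          intro s hs
          rw [Finset.mem_filter] at hs
          obtain ⟨hsS, hφs⟩ := hs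
          rw [Finset.mem_singleton]
          by_cases hcs : c s = s
          · obtain ⟨hw1, hw2⟩ := hφ1 s hcs
            rw [hφs] at hw1 hw2
            rw [← hw2, hcb.1]
          · exfalso
            have hφcs := hφ2 s hcs
            rw [hφs] at hφcs
            have : c b = b := by
              have h2 := hc2 s (Set.mem_univ s)
              rw [← hφcs] at h2
              exact h2
            rw [hcb.1] at this
            exact hcb.2 this.symm
        calc (Sf.filter (fun a => φ a = b)).card ≤ 1 := by
              simpa using Finset.card_le_card hsub
          _ ≤ m := by omega
      · push_neg at hk2
        have hsub : Sf.filter (fun a => φ a = b) ⊆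
            Finset.univ.filter (fun w => c w = b ∧ w ≠ b) := by
          intro s hs
          rw [Finset.mem_filter] at hs
          obtain ⟨hsS, hφs⟩ := hs
          have hcs : c s ≠ s := hk2 s hsS hφs
          have hφcs := hφ2 s hcs
          rw [hφs] at hφcs
          refine Finset.mem_filter.2 ⟨Finset.mem_univ _, hφcs.symm, ?_⟩
          intro hsb
          rw [← hsb] at hφcs
          exact hcs hφcs.symm
        exact le_trans (Finset.card_le_card hsub) (hfib b)
    calc Sf.card ≤ m * (Sf.image φ).card := Finset.card_le_mul_card_image Sf m hbound
      _ ≤ m * Nf.card := Nat.mul_le_mul_left m (Finset.card_le_card himage)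
  · intro hcond
    set nbr : V → Finset V := fun v => Finset.univ.filter (fun w => G.Adj v w) with hnbr
    have hnbrmem : ∀ v w, w ∈ nbr v ↔ G.Adj v w := by
      intro v w
      rw [hnbr]
      simp
    have hall1 : ∀ A : Finset V, A.card ≤ m * (A.biUnion nbr).card := by
      intro A
      set N : Finset V := A.biUnion nbr with hN
      have hNmem : ∀ x, x ∈ N ↔ ∃ s ∈ A, G.Adj s x := by
        intro x
        rw [hN, Finset.mem_biUnion]
        constructor
        · rintro ⟨s, hs, hx⟩
          exact ⟨s, hs, (hnbrmem s x).1 hx⟩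
        · rintro ⟨s, hs, hx⟩
          exact ⟨s, hs, (hnbrmem s x).2 hx⟩
      have hindep : ∀ x ∈ (↑(A \ N) : Set V), ∀ y ∈ (↑(A \ N) : Set V), ¬G.Adj x y := by
        intro x hx y hy hxy
        rw [Finset.mem_coe, Finset.mem_sdiff] at hx hy
        exact hy.2 ((hNmem y).2 ⟨x, hx.1, hxy⟩)
      have hc := hcond (↑(A \ N)) hindep
      have hc1 : {v | ∃ s ∈ (↑(A \ N) : Set V), G.Adj s v} = ↑((A \ N).biUnion nbr) := by
        ext x
        rw [Set.mem_setOf_eq, Finset.mem_coe, Finset.mem_biUnion]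
        constructor
        · rintro ⟨s, hs, hx⟩
          exact ⟨s, Finset.mem_coe.1 hs, (hnbrmem s x).2 hx⟩
        · rintro ⟨s, hs, hx⟩
          exact ⟨s, Finset.mem_coe.2 hs, (hnbrmem s x).1 hx⟩
      rw [Set.ncard_coe_finset, hc1, Set.ncard_coe_finset] at hc
      have hsub2 : (A \ N).biUnion nbr ⊆ N \ A := by
        intro u hu
        rw [Finset.mem_biUnion] at hu
        obtain ⟨b, hb, hu⟩ := hu
        rw [Finset.mem_sdiff] at hb
        rw [Finset.mem_sdiff]
        constructor
        · exact (hNmem u).2 ⟨b, hb.1, (hnbrmem b u).1 hu⟩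
        · intro huA
          exact hb.2 ((hNmem b).2 ⟨u, huA, ((hnbrmem b u).1 hu).symm⟩)
      have h1 : (A \ N).card ≤ m * (N \ A).card :=
        le_trans hc (Nat.mul_le_mul_left m (Finset.card_le_card hsub2))
      have h2 : (A ∩ N).card ≤ m * (N ∩ A).card := by
        rw [Finset.inter_comm]
        exact Nat.le_mul_of_pos_left _ (by omega)
      calc A.card = (A \ N).card + (A ∩ N).card :=
            (Finset.card_sdiff_add_card_inter A N).symm
        _ ≤ m * (N \ A).card + m * (N ∩ A).card := Nat.add_le_add h1 h2
        _ = m * ((N \ A).card + (N ∩ A).card) := (Nat.mul_add m _ _).symm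
        _ = m * N.card := by rw [Finset.card_sdiff_add_card_inter]
    have hall2 : ∀ A : Finset V,
        A.card ≤ (A.biUnion (fun v => nbr v ×ˢ (Finset.univ : Finset (Fin m)))).card := by
      intro A
      have heq : A.biUnion (fun v => nbr v ×ˢ (Finset.univ : Finset (Fin m)))
          = (A.biUnion nbr) ×ˢ (Finset.univ : Finset (Fin m)) := by
        ext ⟨x, i⟩
        simp [Finset.mem_biUnion, Finset.mem_product]
      rw [heq, Finset.card_product, Finset.card_univ, Fintype.card_fin]
      calc A.card ≤ m * (A.biUnion nbr).card := hall1 A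
        _ = (A.biUnion nbr).card * m := Nat.mul_comm _ _
    obtain ⟨F, hFinj, hFmem⟩ :=
      (Finset.all_card_le_biUnion_card_iff_exists_injective
        (fun v => nbr v ×ˢ (Finset.univ : Finset (Fin m)))).1 hall2
    set f : V → V := fun v => (F v).1 with hf
    have hfadj : ∀ v, G.Adj v (f v) := by
      intro v
      have := hFmem v
      rw [Finset.mem_product] at this
      exact (hnbrmem v _).1 this.1
    have hffib : ∀ t, (Finset.univ.filter (fun w => f w = t)).card ≤ m := by
      intro t
      have hmaps : ∀ w ∈ Finset.univ.filter (fun w => f w = t),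
          F w ∈ ({t} : Finset V) ×ˢ (Finset.univ : Finset (Fin m)) := by
        intro w hw
        rw [Finset.mem_filter] at hw
        rw [Finset.mem_product, Finset.mem_singleton]
        exact ⟨hw.2, Finset.mem_univ _⟩
      have hinj : Set.InjOn F ↑(Finset.univ.filter (fun w => f w = t)) :=
        fun a _ b _ hab => hFinj hab
      calc (Finset.univ.filter (fun w => f w = t)).card
          ≤ (({t} : Finset V) ×ˢ (Finset.univ : Finset (Fin m))).card :=
            Finset.card_le_card_of_injOn F hmaps hinj
        _ = m := by rw [Finset.card_product, Finset.card_singleton, Finset.card_univ,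
            Fintype.card_fin, Nat.one_mul]
    obtain ⟨c, p1, p2, p3, p4, p5, p6⟩ := funcStar (G := G) hm (Fintype.card V)
      Finset.univ f (le_of_eq (Finset.card_univ)) (fun v _ => Finset.mem_univ _)
      (fun v _ => (hfadj v).ne') (fun v _ => hfadj v) hffib
    refine ⟨c, fun v _ => Set.mem_univ _, fun v _ => p3 v (Finset.mem_univ v),
      fun v _ => p4 v (Finset.mem_univ v), fun v _ hv => ?_, fun v _ => ?_⟩
    · obtain ⟨w, hw, hwv, hcw⟩ := p5 v (Finset.mem_univ v) hv
      exact ⟨w, Set.mem_univ w, hwv, hcw⟩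
    · have h6 := p6 v
      have hseteq : {w | w ∈ Set.univ ∧ w ≠ v ∧ c w = v} =
          ↑(Finset.univ.filter (fun w => c w = v ∧ w ≠ v)) := by
        ext w
        simp only [Set.mem_setOf_eq, Finset.coe_filter, Finset.mem_univ, Set.mem_univ,
          true_and, Set.mem_setOf_eq]
        tauto
      rw [hseteq, Set.ncard_coe_finset]
      exact h6
end

section
/- Let G be a graph of order n with maximum degree Δ ≤ n - 2 and minimum degree δ. If 3(n-1) + δ ≥ 4Δ, then λ(M(G)) ≤ 2n. -/
open SimpleGraph

/- ----------------------------------------------------------------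
   Auxiliary machinery
   ---------------------------------------------------------------- -/

section AuxPart4
variable {W : Type}
variable {W : Type}

lemma lambda_le_of_list [DecidableEq W] (H : SimpleGraph W) (l : List W) (k : ℕ)
    (hmem : ∀ x, x ∈ l) (hlen : l.length ≤ k + 1)
    (hchain : l.IsChain (fun a b => ¬ H.Adj a b)) :
    sInf {k | ∃ f : W → ℕ,
      ((∀ x y, H.Adj x y → 2 ≤ ((f x : ℤ) - (f y : ℤ)).natAbs) ∧
       (∀ x y, H.dist x y = 2 → f x ≠ f y)) ∧ ∀ v, f v ≤ k} ≤ k := by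
  apply Nat.sInf_le
  have hlt : ∀ x : W, l.idxOf x < l.length := fun x => List.idxOf_lt_length_iff.2 (hmem x)
  have hinj : ∀ x y : W, l.idxOf x = l.idxOf y → x = y := by
    intro x y hxy
    have hx := List.idxOf_get (hlt x)
    have hy := List.idxOf_get (hlt y)
    rw [← hx, ← hy]
    congr 1
    exact Fin.ext hxy
  have hcons : ∀ x y : W, H.Adj x y → l.idxOf y ≠ l.idxOf x + 1 := by
    intro x y hadj heq
    have hb : l.idxOf x + 1 < l.length := by have := hlt y; omega
    have := List.isChain_iff_getElem.1 hchain (l.idxOf x) hb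
    have hgx : l.get ⟨l.idxOf x, by omega⟩ = x := List.idxOf_get (hlt x)
    have hgy : l.get ⟨l.idxOf x + 1, by omega⟩ = y := by
      have := List.idxOf_get (hlt y)
      convert this using 2
      exact Fin.ext heq.symm
    simp only [List.get_eq_getElem] at hgx hgy
    rw [hgx, hgy] at this
    exact this hadj
  refine ⟨fun x => l.idxOf x, ⟨?_, ?_⟩, ?_⟩
  · intro x y hadj
    by_contra hc
    push_neg at hc
    have hne : l.idxOf x ≠ l.idxOf y := fun he => H.ne_of_adj hadj (hinj _ _ he)
    have h1 : l.idxOf y = l.idxOf x + 1 ∨ l.idxOf x = l.idxOf y + 1 := by omega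
    rcases h1 with h1 | h1
    · exact hcons x y hadj h1
    · exact hcons y x (H.adj_symm hadj) h1
  · intro x y hd he
    have : x = y := hinj _ _ he
    rw [this, SimpleGraph.dist_self] at hd
    omega
  · intro v
    have h := hlt v
    simp only []
    omega
end AuxPart4

section AuxParts
open Finset
variable {V : Type}
variable {V : Type}

lemma exists_phi [Fintype V] [DecidableEq V] (G : SimpleGraph V) [DecidableRel G.Adj] (n : ℕ)
    (hn : Fintype.card V = n) (h2 : 2 ≤ n) (hΔ : G.maxDegree ≤ n - 2)
    (h : 4 * G.maxDegree ≤ 3 * (n - 1) + G.minDegree) :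
    ∃ φ : V → V, (∀ v, ¬ G.Adj v (φ v)) ∧ (∀ v, φ v ≠ v) ∧
      ∀ c, (Finset.univ.filter (fun x => φ x = c)).card ≤ 4 := by
  classical
  set H := Gᶜ with hH
  have hVne : Nonempty V := by
    rw [← Fintype.card_pos_iff, hn]; omega
  obtain ⟨v₀⟩ := hVne
  set d : ℕ := n - 1 - G.maxDegree with hd
  set D : ℕ := n - 1 - G.minDegree with hD
  have hdel : G.minDegree ≤ G.maxDegree :=
    le_trans (G.minDegree_le_degree v₀) (G.degree_le_maxDegree v₀)
  have hd1 : 1 ≤ d := by omega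
  have hDd : D ≤ 4 * d := by omega
  have hdegH : ∀ v : V, H.degree v = n - 1 - G.degree v := by
    intro v
    have := SimpleGraph.degree_compl (G := G) (v := v)
    rw [hn] at this
    exact this
  have hdlow : ∀ v : V, d ≤ H.degree v := by
    intro v
    rw [hdegH v]
    have := G.degree_le_maxDegree v
    have h3 : G.degree v ≤ n - 1 := by omega
    omega
  have hdhigh : ∀ v : V, H.degree v ≤ D := by
    intro v
    rw [hdegH v]
    have := G.minDegree_le_degree v
    omega
  -- Hall condition
  have hall : ∀ S : Finset V, S.card ≤ 4 * (S.biUnion (fun v => H.neighborFinset v)).card := by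
    intro S
    set NB := S.biUnion (fun v => H.neighborFinset v) with hNB
    have e1 : S.card * d ≤ ∑ v ∈ S, H.degree v := by
      have := Finset.card_nsmul_le_sum S (fun v => H.degree v) d (fun v _ => hdlow v)
      simpa [smul_eq_mul] using this
    have e2 : ∀ v ∈ S, H.neighborFinset v = NB.filter (fun w => H.Adj v w) := by
      intro v hv
      ext w
      simp only [mem_neighborFinset, mem_filter, hNB, mem_biUnion]
      constructor
      · intro hw; exact ⟨⟨v, hv, by simpa [mem_neighborFinset] using hw⟩, hw⟩
      · exact fun hw => hw.2
    have e3 : ∑ v ∈ S, H.degree v = ∑ v ∈ S, ∑ w ∈ NB, (if H.Adj v w then 1 else 0) := by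
      apply Finset.sum_congr rfl
      intro v hv
      rw [← SimpleGraph.card_neighborFinset_eq_degree, e2 v hv, Finset.card_filter]
    have e4 : ∑ v ∈ S, ∑ w ∈ NB, (if H.Adj v w then 1 else 0)
        = ∑ w ∈ NB, (S.filter (fun v => H.Adj v w)).card := by
      rw [Finset.sum_comm]
      apply Finset.sum_congr rfl
      intro w _
      rw [Finset.card_filter]
    have e5 : ∑ w ∈ NB, (S.filter (fun v => H.Adj v w)).card ≤ NB.card * D := by
      have : ∀ w ∈ NB, (S.filter (fun v => H.Adj v w)).card ≤ D := by
        intro w _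
        refine le_trans (Finset.card_le_card ?_) (hdhigh w)
        intro v hv
        simp only [mem_filter] at hv
        simpa [mem_neighborFinset] using hv.2.symm
      have := Finset.sum_le_card_nsmul NB _ D this
      simpa [smul_eq_mul] using this
    have key : S.card * d ≤ NB.card * (4 * d) := by
      calc S.card * d ≤ NB.card * D := by omega
        _ ≤ NB.card * (4 * d) := Nat.mul_le_mul_left _ hDd
    have : S.card * d ≤ (4 * NB.card) * d := by
      calc S.card * d ≤ NB.card * (4 * d) := key
        _ = (4 * NB.card) * d := by ring
    exact Nat.le_of_mul_le_mul_right this hd1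
  -- transfer to product sets for Hall's theorem
  have hall' : ∀ S : Finset V,
      S.card ≤ (S.biUnion (fun v => (H.neighborFinset v) ×ˢ (Finset.univ : Finset (Fin 4)))).card := by
    intro S
    have hprod : S.biUnion (fun v => (H.neighborFinset v) ×ˢ (Finset.univ : Finset (Fin 4)))
        = (S.biUnion (fun v => H.neighborFinset v)) ×ˢ (Finset.univ : Finset (Fin 4)) := by
      ext p
      simp only [mem_biUnion, mem_product, mem_univ, and_true]
      try tauto
    rw [hprod, Finset.card_product]
    have := hall S
    simp only [Finset.card_univ, Fintype.card_fin]
    omega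
  obtain ⟨f, hfinj, hfmem⟩ := (Finset.all_card_le_biUnion_card_iff_exists_injective _).1 hall'
  refine ⟨fun v => (f v).1, ?_, ?_, ?_⟩
  · intro v
    have := hfmem v
    rw [Finset.mem_product] at this
    have hadj : H.Adj v (f v).1 := by simpa [mem_neighborFinset] using this.1
    rw [hH, SimpleGraph.compl_adj] at hadj
    exact hadj.2
  · intro v
    have := hfmem v
    rw [Finset.mem_product] at this
    have hadj : H.Adj v (f v).1 := by simpa [mem_neighborFinset] using this.1
    intro he
    have he' : (f v).1 = v := he
    rw [he'] at hadj
    exact H.irrefl hadj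
  · intro c
    show (Finset.univ.filter (fun x => (f x).1 = c)).card ≤ 4
    have : (Finset.univ.filter (fun x => (f x).1 = c)).card ≤ (Finset.univ : Finset (Fin 4)).card := by
      apply Finset.card_le_card_of_injOn (fun x => (f x).2)
      · intro x _; exact Finset.mem_univ _
      · intro x hx y hy hxy
        rw [Finset.mem_coe, mem_filter] at hx hy
        apply hfinj
        have hx2 : f x = (c, (f x).2) := by
          rw [← hx.2]
        have hy2 : f y = (c, (f y).2) := by
          rw [← hy.2]
        have hxy' : (f x).2 = (f y).2 := hxy
        rw [hx2, hy2, hxy']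
    have h4 : (Finset.univ : Finset (Fin 4)).card = 4 := by simp
    omega
variable {V : Type}

/-- legality of a list of stars w.r.t. `f` -/
def StarsOk (f : V → V) (L : List (V × List V)) : Prop :=
  ∀ s ∈ L, s.2 ≠ [] ∧ s.2.length ≤ 4 ∧ ∀ l ∈ s.2, f l = s.1 ∨ f s.1 = l

lemma cover_pure (f : V → V) :
    ∀ (N : ℕ) (cl : List V), cl.length ≤ N → 2 ≤ cl.length →
    cl.IsChain (fun a b => f a = b) →
    ∃ L : List (V × List V), StarsOk f L ∧
      (L.flatMap fun s => s.1 :: s.2).Perm cl := by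
  intro N
  induction N with
  | zero => intro cl h1 h2 _; omega
  | succ N ih =>
    intro cl hlen h2 hch
    match cl, h2 with
    | [x, y], _ =>
      refine ⟨[(y, [x])], ?_, ?_⟩
      · intro s hs
        simp only [List.mem_singleton] at hs
        subst hs
        refine ⟨by simp, by simp, ?_⟩
        intro l hl
        simp only [List.mem_singleton] at hl
        subst hl
        left
        exact (List.isChain_cons_cons.1 hch).1
      · simp [List.flatMap]
        exact List.Perm.swap x y []
    | [x, y, z], _ =>
      have hxy : f x = y := by
        simp only [List.isChain_cons_cons] at hch
        exact hch.1
      have hyz : f y = z := by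
        simp only [List.isChain_cons_cons] at hch
        exact hch.2.1
      refine ⟨[(y, [x, z])], ?_, ?_⟩
      · intro s hs
        simp only [List.mem_singleton] at hs
        subst hs
        refine ⟨by simp, by simp, ?_⟩
        intro l hl
        simp only [List.mem_cons, List.mem_singleton] at hl
        rcases hl with h | h
        · subst h; left; exact hxy
        · simp only [List.not_mem_nil, or_false] at h
          subst h; right; exact hyz
      · simp [List.flatMap]
        exact List.Perm.swap x y [z]
    | x :: y :: z :: w :: rest, _ =>
      have hxy : f x = y := (List.isChain_cons_cons.1 hch).1
      have hch' : (z :: w :: rest).IsChain (fun a b => f a = b) := by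
        have h1 := (List.isChain_cons_cons.1 hch).2
        exact (List.isChain_cons_cons.1 h1).2
      obtain ⟨L', hok', hperm'⟩ := ih (z :: w :: rest) (by simp at hlen ⊢; omega) (by simp) hch'
      refine ⟨(y, [x]) :: L', ?_, ?_⟩
      · intro s hs
        rcases List.mem_cons.1 hs with h | h
        · subst h
          exact ⟨by simp, by simp, by
            intro l hl
            simp only [List.mem_singleton] at hl
            subst hl
            left; exact hxy⟩
        · exact hok' s h
      · show (y :: x :: (L'.flatMap fun s => s.1 :: s.2)).Perm (x :: y :: z :: w :: rest)
        exact List.Perm.trans (List.Perm.swap x y _) ((hperm'.cons y).cons x)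
variable {V : Type}

lemma flatMap_of_empty [DecidableEq V] (P : V → Finset V) :
    ∀ (m : List V), (∀ c ∈ m, P c = ∅) → (m.flatMap fun c => c :: (P c).toList) = m := by
  intro m
  induction m with
  | nil => simp
  | cons a t ih =>
    intro hall
    have ha : P a = ∅ := hall a (by simp)
    simp only [List.flatMap_cons, ha, Finset.toList_empty]
    rw [ih (fun c hc => hall c (by simp [hc]))]
    rfl

lemma dropWhile_head_not {α : Type} (p : α → Bool) :
    ∀ (l : List α) (x : α) (xs : List α), l.dropWhile p = x :: xs → p x = false := by
  intro l
  induction l with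
  | nil => intro x xs h; simp at h
  | cons a t ih =>
    intro x xs h
    by_cases hp : p a
    · rw [List.dropWhile_cons_of_pos hp] at h
      exact ih x xs h
    · rw [List.dropWhile_cons_of_neg hp] at h
      cases h
      simpa using hp

lemma cover_mixed [DecidableEq V] (f : V → V) (P : V → Finset V) :
    ∀ (N : ℕ) (cl : List V), cl.length ≤ N →
    cl.IsChain (fun a b => f a = b) →
    (∀ c ∈ cl, (P c).card ≤ 3) →
    (∀ c ∈ cl, ∀ x ∈ P c, f x = c) →
    (cl = [] ∨ (∃ hd tl, cl = hd :: tl ∧ (P hd).Nonempty) ∨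
      (2 ≤ cl.length ∧ ∀ c ∈ cl, P c = ∅)) →
    ∃ L : List (V × List V), StarsOk f L ∧
      (L.flatMap fun s => s.1 :: s.2).Perm (cl.flatMap fun c => c :: (P c).toList) := by
  intro N
  induction N with
  | zero =>
    intro cl h1 _ _ _ _
    have : cl = [] := by
      cases cl with
      | nil => rfl
      | cons a t => simp at h1
    subst this
    exact ⟨[], by intro s hs; simp at hs, by simp⟩
  | succ N ih =>
    intro cl hlen hch hP3 hPf hok
    rcases hok with rfl | ⟨hd, tl, rfl, hPhd⟩ | ⟨hl2, hPall⟩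
    · exact ⟨[], by intro s hs; simp at hs, by simp⟩
    · -- head has nonempty pendant set
      classical
      let p : V → Bool := fun x => decide (P x = ∅)
      have htl : tl.takeWhile p ++ tl.dropWhile p = tl := List.takeWhile_append_dropWhile
      have heP : ∀ x ∈ tl.takeWhile p, P x = ∅ := by
        intro x hx
        have := List.mem_takeWhile_imp hx
        exact of_decide_eq_true this
      have hrmem : ∀ x ∈ tl.dropWhile p, x ∈ tl :=
        fun x hx => (List.dropWhile_sublist p).mem hx
      have hchtl : tl.IsChain (fun a b => f a = b) := hch.tail
      have hche : (tl.takeWhile p).IsChain (fun a b => f a = b) := by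
        rw [← htl] at hchtl
        exact (List.isChain_append.1 hchtl).1
      have hchr : (tl.dropWhile p).IsChain (fun a b => f a = b) := by
        conv at hchtl => rw [← htl]
        exact (List.isChain_append.1 hchtl).2.1
      have hrok : tl.dropWhile p = [] ∨
          (∃ h' t', tl.dropWhile p = h' :: t' ∧ (P h').Nonempty) := by
        cases hr' : tl.dropWhile p with
        | nil => exact Or.inl rfl
        | cons h' t' =>
          refine Or.inr ⟨h', t', rfl, ?_⟩
          have := dropWhile_head_not p tl h' t' hr'
          rw [Finset.nonempty_iff_ne_empty]
          intro hcon
          simp [p, hcon] at this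
      have hrlen : (tl.dropWhile p).length ≤ N := by
        have h1 : (tl.dropWhile p).length ≤ tl.length := (List.dropWhile_sublist p).length_le
        simp at hlen
        omega
      obtain ⟨L', hok', hperm'⟩ : ∃ L : List (V × List V), StarsOk f L ∧
          (L.flatMap fun s => s.1 :: s.2).Perm
            ((tl.dropWhile p).flatMap fun c => c :: (P c).toList) := by
        apply ih _ hrlen hchr
        · exact fun c hc => hP3 c (by simp [hrmem c hc])
        · exact fun c hc => hPf c (by simp [hrmem c hc])
        · rcases hrok with h | ⟨h', t', h1, h2⟩
          · exact Or.inl h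
          · exact Or.inr (Or.inl ⟨h', t', h1, h2⟩)
      have htarget : ((hd :: tl).flatMap fun c => c :: (P c).toList)
          = hd :: ((P hd).toList ++ (((tl.takeWhile p).flatMap fun c => c :: (P c).toList)
              ++ ((tl.dropWhile p).flatMap fun c => c :: (P c).toList))) := by
        conv_lhs => rw [← htl]
        rw [List.flatMap_cons, List.flatMap_append]
        simp only [List.cons_append]
      have heflat : ((tl.takeWhile p).flatMap fun c => c :: (P c).toList) = tl.takeWhile p :=
        flatMap_of_empty P _ heP
      rcases he' : tl.takeWhile p with _ | ⟨y, e'⟩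
      · -- run empty
        refine ⟨(hd, (P hd).toList) :: L', ?_, ?_⟩
        · intro s hs
          rcases List.mem_cons.1 hs with h | h
          · subst h
            refine ⟨?_, ?_, ?_⟩
            · simp only [ne_eq, Finset.toList_eq_nil]
              exact Finset.nonempty_iff_ne_empty.1 hPhd
            · rw [Finset.length_toList]
              have := hP3 hd (by simp)
              omega
            · intro l hl
              left
              exact hPf hd (by simp) l (Finset.mem_toList.1 hl)
          · exact hok' s h
        · rw [htarget, he']
          simp only [List.flatMap_cons, List.flatMap_nil, List.nil_append, List.cons_append]
          exact (List.Perm.append_left _ hperm').cons hd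
      · rcases he'' : e' with _ | ⟨z, e''⟩
        · -- run of length 1
          subst he''
          have htly : tl = y :: tl.dropWhile p := by
            conv_lhs => rw [← htl]
            rw [he']
            rfl
          have hfhdy : f hd = y := by
            rw [htly] at hch
            exact (List.isChain_cons_cons.1 hch).1
          have hPy : P y = ∅ := heP y (by rw [he']; simp)
          refine ⟨(hd, (P hd).toList ++ [y]) :: L', ?_, ?_⟩
          · intro s hs
            rcases List.mem_cons.1 hs with h | h
            · subst h
              refine ⟨by simp, ?_, ?_⟩
              · simp only [List.length_append, List.length_singleton, Finset.length_toList]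
                have := hP3 hd (by simp)
                omega
              · intro l hl
                rcases List.mem_append.1 hl with h | h
                · left; exact hPf hd (by simp) l (Finset.mem_toList.1 h)
                · right
                  simp only [List.mem_singleton] at h
                  subst h
                  exact hfhdy
            · exact hok' s h
          · rw [htarget, he']
            simp only [List.flatMap_cons, List.flatMap_nil, hPy, Finset.toList_empty,
              List.nil_append, List.cons_append, List.append_assoc, List.singleton_append]
            exact (List.Perm.append_left _ ((hperm').cons y)).cons hd
        · -- run of length ≥ 2
          subst he''
          have hlene : 2 ≤ (tl.takeWhile p).length := by rw [he']; simp
          have hche' : (y :: z :: e'').IsChain (fun a b => f a = b) := by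
            rw [he'] at hche
            exact hche
          obtain ⟨L₀, hok₀, hperm₀⟩ := cover_pure f (y :: z :: e'').length (y :: z :: e'')
            (le_refl _) (by simp) hche'
          refine ⟨(hd, (P hd).toList) :: (L₀ ++ L'), ?_, ?_⟩
          · intro s hs
            rcases List.mem_cons.1 hs with h | h
            · subst h
              refine ⟨?_, ?_, ?_⟩
              · simp only [ne_eq, Finset.toList_eq_nil]
                exact Finset.nonempty_iff_ne_empty.1 hPhd
              · rw [Finset.length_toList]
                have := hP3 hd (by simp)
                omega
              · intro l hl
                left
                exact hPf hd (by simp) l (Finset.mem_toList.1 hl)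
            · rcases List.mem_append.1 h with h | h
              · exact hok₀ s h
              · exact hok' s h
          · rw [htarget, he']
            have heflat' : ((y :: z :: e'').flatMap fun c => c :: (P c).toList) = y :: z :: e'' := by
              rw [he'] at heflat
              exact heflat
            rw [heflat']
            simp only [List.flatMap_cons, List.flatMap_append, List.cons_append, List.nil_append]
            refine List.Perm.cons hd ?_
            refine List.Perm.append_left _ ?_
            exact List.Perm.append hperm₀ hperm'
    · -- all pendant sets empty
      rw [flatMap_of_empty P cl hPall]
      exact cover_pure f cl.length cl (le_refl _) hl2 hch
variable {V : Type}

lemma nodup_piece_flatMap [DecidableEq V] (f : V → V) (NS : Finset V) (P : V → Finset V)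
    (hPf : ∀ c, ∀ x ∈ P c, f x = c) (hfx : ∀ v, f v ≠ v)
    (hPNS : ∀ c, ∀ x ∈ P c, x ∉ NS) :
    ∀ (l : List V), l.Nodup → (∀ c ∈ l, c ∈ NS) →
    (l.flatMap (fun c => c :: (P c).toList)).Nodup := by
  intro l
  induction l with
  | nil => simp
  | cons a t ih =>
    intro hnd hmem
    rw [List.flatMap_cons]
    apply List.Nodup.append
    · refine List.nodup_cons.2 ⟨?_, Finset.nodup_toList _⟩
      intro ha
      exact hfx a (hPf a a (Finset.mem_toList.1 ha))
    · exact ih (List.nodup_cons.1 hnd).2 (fun c hc => hmem c (by simp [hc]))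
    · intro x hx hx'
      have hanotint : a ∉ t := (List.nodup_cons.1 hnd).1
      obtain ⟨c, hct, hxc⟩ := List.mem_flatMap.1 hx'
      have hcNS : c ∈ NS := hmem c (by simp [hct])
      have hac : a ≠ c := fun h => hanotint (h ▸ hct)
      rcases List.mem_cons.1 hx with rfl | hxPa
      · -- x = a
        rcases List.mem_cons.1 hxc with h | h
        · exact hac h
        · exact hPNS c x (Finset.mem_toList.1 h) (hmem x (by simp))
      · -- x ∈ P a
        have hxa : f x = a := hPf a x (Finset.mem_toList.1 hxPa)
        rcases List.mem_cons.1 hxc with rfl | h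
        · exact hPNS a x (Finset.mem_toList.1 hxPa) hcNS
        · have : f x = c := hPf c x (Finset.mem_toList.1 h)
          exact hac (hxa ▸ this)

lemma star_partition [DecidableEq V] (f : V → V) (hfx : ∀ v, f v ≠ v) :
    ∀ (M : ℕ) (A : Finset V), A.card ≤ M → (∀ a ∈ A, f a ∈ A) →
    (∀ c, (A.filter (fun x => f x = c)).card ≤ 4) →
    ∃ L : List (V × List V), StarsOk f L ∧
      ((L.flatMap fun s => s.1 :: s.2 : List V) : Multiset V) = A.val := by
  intro M
  induction M with
  | zero =>
    intro A hA _ _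
    have : A = ∅ := Finset.card_eq_zero.1 (Nat.le_zero.1 hA)
    subst this
    exact ⟨[], fun s hs => absurd hs List.not_mem_nil, by simp⟩
  | succ M ih =>
    intro A hAcard hfA hfib
    rcases Finset.eq_empty_or_nonempty A with rfl | hAne
    · exact ⟨[], fun s hs => absurd hs List.not_mem_nil, by simp⟩
    by_cases hcase : ∃ c ∈ A, (A.filter (fun x => f x = c)).Nonempty ∧
        ∀ x ∈ A.filter (fun x => f x = c), A.filter (fun y => f y = x) = ∅
    · -- case (i): a "shallow" center exists
      obtain ⟨c, hcA, hFne, hleaf⟩ := hcase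
      have hSsub : insert c (A.filter (fun x => f x = c)) ⊆ A :=
        Finset.insert_subset hcA (Finset.filter_subset _ _)
      have hA'lt : (A \ insert c (A.filter (fun x => f x = c))).card < A.card :=
        Finset.card_lt_card (Finset.sdiff_ssubset hSsub ⟨c, Finset.mem_insert_self _ _⟩)
      have hfA' : ∀ a ∈ A \ insert c (A.filter (fun x => f x = c)),
          f a ∈ A \ insert c (A.filter (fun x => f x = c)) := by
        intro a ha
        rw [Finset.mem_sdiff] at ha ⊢
        obtain ⟨haA, haS⟩ := ha
        refine ⟨hfA a haA, ?_⟩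
        intro hfaS
        rcases Finset.mem_insert.1 hfaS with h | h
        · exact haS (Finset.mem_insert_of_mem (Finset.mem_filter.2 ⟨haA, h⟩))
        · have hempty := hleaf _ h
          have ha' : a ∈ A.filter (fun y => f y = f a) := Finset.mem_filter.2 ⟨haA, rfl⟩
          rw [hempty] at ha'
          exact absurd ha' (Finset.notMem_empty a)
      have hfib' : ∀ c', ((A \ insert c (A.filter (fun x => f x = c))).filter
          (fun x => f x = c')).card ≤ 4 := by
        intro c'
        refine le_trans (Finset.card_le_card ?_) (hfib c')
        exact Finset.filter_subset_filter _ Finset.sdiff_subset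
      obtain ⟨L', hok', hmul'⟩ := ih _ (by omega) hfA' hfib'
      refine ⟨(c, (A.filter (fun x => f x = c)).toList) :: L', ?_, ?_⟩
      · intro s hs
        rcases List.mem_cons.1 hs with h | h
        · subst h
          refine ⟨?_, ?_, ?_⟩
          · simpa [ne_eq, Finset.toList_eq_nil] using Finset.nonempty_iff_ne_empty.1 hFne
          · rw [Finset.length_toList]; exact hfib c
          · intro l hl
            left
            exact (Finset.mem_filter.1 (Finset.mem_toList.1 hl)).2
        · exact hok' s h
      · rw [List.flatMap_cons]
        push_cast [← Multiset.coe_add, ← Multiset.cons_coe]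
        rw [hmul']
        have hcnot : c ∉ A.filter (fun x => f x = c) := by
          simp only [Finset.mem_filter]
          exact fun hc => hfx c hc.2
        have key : (insert c (A.filter (fun x => f x = c))).val
            + (A \ insert c (A.filter (fun x => f x = c))).val = A.val := by
          rw [Finset.sdiff_val, add_tsub_cancel_of_le (Finset.val_le_iff.2 hSsub)]
        rw [Finset.insert_val_of_notMem hcnot] at key
        convert key using 1
    · -- case (ii): pure cycle structure on the set of non-sources
      push_neg at hcase
      set NS := A.filter (fun c => (A.filter (fun x => f x = c)).Nonempty) with hNS
      have hNSsubA : NS ⊆ A := Finset.filter_subset _ _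
      have F0 : ∀ a ∈ A, f a ∈ NS := by
        intro a ha
        exact Finset.mem_filter.2 ⟨hfA a ha, ⟨a, Finset.mem_filter.2 ⟨ha, rfl⟩⟩⟩
      set g : V → Finset V := fun c => (A.filter (fun x => f x = c)) ∩ NS with hg
      have F1 : ∀ c ∈ NS, (g c).Nonempty := by
        intro c hc
        obtain ⟨hcA, hcne⟩ := Finset.mem_filter.1 hc
        obtain ⟨x, hx1, hx2⟩ := hcase c hcA hcne
        have hxA : x ∈ A := (Finset.mem_filter.1 hx1).1
        have hxNS : x ∈ NS := Finset.mem_filter.2 ⟨hxA, hx2⟩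
        exact ⟨x, Finset.mem_inter.2 ⟨hx1, hxNS⟩⟩
      have hdisj : ∀ c ∈ NS, ∀ c' ∈ NS, c ≠ c' → Disjoint (g c) (g c') := by
        intro c _ c' _ hne
        rw [Finset.disjoint_left]
        intro x hx hx'
        have h1 : f x = c := (Finset.mem_filter.1 (Finset.mem_inter.1 hx).1).2
        have h2 : f x = c' := (Finset.mem_filter.1 (Finset.mem_inter.1 hx').1).2
        exact hne (h1 ▸ h2)
      have hsub : NS.biUnion g ⊆ NS := by
        intro x hx
        obtain ⟨c, _, hxc⟩ := Finset.mem_biUnion.1 hx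
        exact (Finset.mem_inter.1 hxc).2
      have hsum : (NS.biUnion g).card = ∑ c ∈ NS, (g c).card := Finset.card_biUnion hdisj
      have h1le : ∀ c ∈ NS, 1 ≤ (g c).card := fun c hc => Finset.card_pos.2 (F1 c hc)
      have hsumge : NS.card ≤ ∑ c ∈ NS, (g c).card := by
        calc NS.card = ∑ _c ∈ NS, 1 := by simp
          _ ≤ ∑ c ∈ NS, (g c).card := Finset.sum_le_sum h1le
      have hsumle : ∑ c ∈ NS, (g c).card ≤ NS.card := by
        rw [← hsum]; exact Finset.card_le_card hsub
      have hTeq : NS.biUnion g = NS :=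
        Finset.eq_of_subset_of_card_le hsub (by omega)
      have F2 : ∀ c ∈ NS, (g c).card = 1 := by
        intro c hc
        by_contra hne
        have h2 : 2 ≤ (g c).card := by
          have := h1le c hc
          omega
        have : ∑ _c ∈ NS, 1 < ∑ c ∈ NS, (g c).card :=
          Finset.sum_lt_sum h1le ⟨c, hc, by omega⟩
        simp only [Finset.sum_const, smul_eq_mul, mul_one] at this
        omega
      have F3 : ∀ u ∈ NS, f u ∈ NS ∧ u ∈ g (f u) := by
        intro u hu
        have hu2 : u ∈ NS.biUnion g := by rw [hTeq]; exact hu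
        obtain ⟨c, hcNS, hug⟩ := Finset.mem_biUnion.1 hu2
        have : f u = c := (Finset.mem_filter.1 (Finset.mem_inter.1 hug).1).2
        subst this
        exact ⟨hcNS, hug⟩
      have F4 : ∀ u v, u ∈ NS → v ∈ NS → f u = f v → u = v := by
        intro u v hu hv heq
        have hu' := (F3 u hu).2
        have hv' := (F3 v hv).2
        rw [← heq] at hv'
        have hcard := F2 (f u) (F3 u hu).1
        exact Finset.card_le_one.1 (le_of_eq hcard) u hu' v hv'
      set P : V → Finset V := fun c => (A.filter (fun x => f x = c)) \ NS with hP
      have hPf : ∀ c, ∀ x ∈ P c, f x = c :=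
        fun c x hx => (Finset.mem_filter.1 (Finset.mem_sdiff.1 hx).1).2
      have hPA : ∀ c, P c ⊆ A :=
        fun c => Finset.Subset.trans Finset.sdiff_subset (Finset.filter_subset _ _)
      have hPNS : ∀ c, ∀ x ∈ P c, x ∉ NS := fun c x hx => (Finset.mem_sdiff.1 hx).2
      have hP3 : ∀ c ∈ NS, (P c).card ≤ 3 := by
        intro c hc
        have hsplit := Finset.card_sdiff_add_card_inter (A.filter (fun x => f x = c)) NS
        have h4 := hfib c
        have h1 : ((A.filter (fun x => f x = c)) ∩ NS).card = 1 := F2 c hc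
        show ((A.filter (fun x => f x = c)) \ NS).card ≤ 3
        omega
      -- choose the starting point of a cycle
      have hNSne : NS.Nonempty := by
        obtain ⟨a, ha⟩ := hAne
        exact ⟨f a, F0 a ha⟩
      obtain ⟨a₀, ha₀NS, ha₀prop⟩ :
          ∃ a₀ ∈ NS, ((P a₀).Nonempty ∨ ∀ x ∈ NS, P x = ∅) := by
        by_cases hex : ∃ x ∈ NS, (P x).Nonempty
        · obtain ⟨x, hx1, hx2⟩ := hex
          exact ⟨x, hx1, Or.inl hx2⟩
        · push_neg at hex
          obtain ⟨x, hx⟩ := hNSne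
          exact ⟨x, hx, Or.inr (fun y hy =>
            hex y hy)⟩
      have hiter : ∀ k, f^[k] a₀ ∈ NS := by
        intro k
        induction k with
        | zero => simpa using ha₀NS
        | succ k ihk =>
          rw [Function.iterate_succ_apply']
          exact (F3 _ ihk).1
      have hcancel : ∀ (k : ℕ) (x y : V), (∀ j, f^[j] x ∈ NS) → (∀ j, f^[j] y ∈ NS) →
          f^[k] x = f^[k] y → x = y := by
        intro k
        induction k with
        | zero => intro x y _ _ h; simpa using h
        | succ k ihk =>
          intro x y hx hy h
          rw [Function.iterate_succ_apply, Function.iterate_succ_apply] at h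
          have hfx' := ihk (f x) (f y)
            (fun j => by rw [← Function.iterate_succ_apply]; exact hx (j + 1))
            (fun j => by rw [← Function.iterate_succ_apply]; exact hy (j + 1)) h
          exact F4 x y (by simpa using hx 0) (by simpa using hy 0) hfx'
      have hper : ∃ d, 0 < d ∧ f^[d] a₀ = a₀ := by
        have hmaps : ∀ i ∈ Finset.range (NS.card + 1), f^[i] a₀ ∈ NS :=
          fun i _ => hiter i
        have hlt : NS.card < (Finset.range (NS.card + 1)).card := by simp
        obtain ⟨i, hi, j, hj, hij, heq⟩ :=
          Finset.exists_ne_map_eq_of_card_lt_of_maps_to hlt hmaps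
        rcases Nat.lt_or_ge i j with hlt' | hge
        · refine ⟨j - i, by omega, ?_⟩
          have : f^[i] (f^[j - i] a₀) = f^[i] a₀ := by
            rw [← Function.iterate_add_apply]
            have : i + (j - i) = j := by omega
            rw [this, heq]
          exact (hcancel i _ _ (fun j' => by
            rw [← Function.iterate_add_apply]; exact hiter _) hiter this)
        · have hlt'' : j < i := by omega
          refine ⟨i - j, by omega, ?_⟩
          have : f^[j] (f^[i - j] a₀) = f^[j] a₀ := by
            rw [← Function.iterate_add_apply]
            have : j + (i - j) = i := by omega
            rw [this, ← heq]
          exact (hcancel j _ _ (fun j' => by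
            rw [← Function.iterate_add_apply]; exact hiter _) hiter this)
      set m := Nat.find hper with hm
      have hmspec : 0 < m ∧ f^[m] a₀ = a₀ := Nat.find_spec hper
      have hmin : ∀ k, k < m → ¬(0 < k ∧ f^[k] a₀ = a₀) := fun k hk => Nat.find_min hper hk
      have hm2 : 2 ≤ m := by
        rcases Nat.lt_or_ge m 2 with h | h
        · exfalso
          interval_cases m
          · exact absurd hmspec.1 (by omega)
          · exact hfx a₀ (by simpa using hmspec.2)
        · exact h
      set cl : List V := (List.range m).map (fun i => f^[i] a₀) with hcl
      have hcllen : cl.length = m := by simp [hcl]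
      have hclmem : ∀ x ∈ cl, x ∈ NS := by
        intro x hx
        rw [hcl, List.mem_map] at hx
        obtain ⟨i, _, rfl⟩ := hx
        exact hiter i
      have hinj2 : ∀ i j, i < m → j < m → f^[i] a₀ = f^[j] a₀ → i = j := by
        intro i j hi hj heq
        rcases Nat.lt_trichotomy i j with h | h | h
        · exfalso
          have : f^[i] (f^[j - i] a₀) = f^[i] a₀ := by
            rw [← Function.iterate_add_apply]
            have : i + (j - i) = j := by omega
            rw [this, heq]
          have ha := hcancel i _ _ (fun j' => by
            rw [← Function.iterate_add_apply]; exact hiter _) hiter this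
          exact hmin (j - i) (by omega) ⟨by omega, ha⟩
        · exact h
        · exfalso
          have : f^[j] (f^[i - j] a₀) = f^[j] a₀ := by
            rw [← Function.iterate_add_apply]
            have : j + (i - j) = i := by omega
            rw [this, ← heq]
          have ha := hcancel j _ _ (fun j' => by
            rw [← Function.iterate_add_apply]; exact hiter _) hiter this
          exact hmin (i - j) (by omega) ⟨by omega, ha⟩
      have hclnodup : cl.Nodup := by
        rw [hcl]
        refine List.Nodup.map_on ?_ (List.nodup_range)
        intro i hi j hj heq
        exact hinj2 i j (List.mem_range.1 hi) (List.mem_range.1 hj) heq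
      have hclchain : cl.IsChain (fun a b => f a = b) := by
        rw [List.isChain_iff_getElem]
        intro i hlen
        simp only [hcl, List.get_eq_getElem, List.getElem_map, List.getElem_range]
        exact (Function.iterate_succ_apply' f i a₀).symm
      have hwrap : ∃ y ∈ cl, f y = a₀ := by
        refine ⟨f^[m - 1] a₀, ?_, ?_⟩
        · rw [hcl, List.mem_map]
          exact ⟨m - 1, List.mem_range.2 (by omega), rfl⟩
        · have h : f^[m] a₀ = f (f^[m - 1] a₀) := by
            conv_lhs => rw [show m = m - 1 + 1 by omega]
            exact Function.iterate_succ_apply' f (m - 1) a₀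
          rw [← h]
          exact hmspec.2
      have hpred : ∀ x ∈ cl, ∃ y ∈ cl, f y = x := by
        intro x hx
        rw [hcl, List.mem_map] at hx
        obtain ⟨i, hi, rfl⟩ := hx
        rw [List.mem_range] at hi
        rcases Nat.eq_zero_or_pos i with rfl | hipos
        · simpa using hwrap
        · refine ⟨f^[i - 1] a₀, ?_, ?_⟩
          · rw [hcl, List.mem_map]
            exact ⟨i - 1, List.mem_range.2 (by omega), rfl⟩
          · have h : f^[i] a₀ = f (f^[i - 1] a₀) := by
              conv_lhs => rw [show i = i - 1 + 1 by omega]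
              exact Function.iterate_succ_apply' f (i - 1) a₀
            exact h.symm
      have hclhead : ∃ tl, cl = a₀ :: tl := by
        obtain ⟨m', hm'⟩ : ∃ m', m = m' + 1 := ⟨m - 1, by omega⟩
        refine ⟨(List.range m').map (fun i => f^[i + 1] a₀), ?_⟩
        rw [hcl, hm', List.range_succ_eq_map, List.map_cons, List.map_map]
        rfl
      -- the component
      set bigL : List V := cl.flatMap (fun c => c :: (P c).toList) with hbigL
      have hbignodup : bigL.Nodup :=
        nodup_piece_flatMap f NS P (fun c x hx => hPf c x hx) hfx hPNS cl hclnodup hclmem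
      have hmemBig : ∀ v, v ∈ bigL ↔ (v ∈ cl ∨ ∃ c ∈ cl, v ∈ P c) := by
        intro v
        rw [hbigL, List.mem_flatMap]
        constructor
        · rintro ⟨c, hc, hvc⟩
          rcases List.mem_cons.1 hvc with rfl | h
          · exact Or.inl hc
          · exact Or.inr ⟨c, hc, Finset.mem_toList.1 h⟩
        · rintro (h | ⟨c, hc, hvc⟩)
          · exact ⟨v, h, by simp⟩
          · exact ⟨c, hc, by simp [Finset.mem_toList.2 hvc]⟩
      set Comp : Finset V := bigL.toFinset with hComp
      have hCompmem : ∀ v, v ∈ Comp ↔ (v ∈ cl ∨ ∃ c ∈ cl, v ∈ P c) := by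
        intro v
        rw [hComp, List.mem_toFinset]
        exact hmemBig v
      have hCompsub : Comp ⊆ A := by
        intro v hv
        rcases (hCompmem v).1 hv with h | ⟨c, _, hvc⟩
        · exact hNSsubA (hclmem v h)
        · exact hPA c hvc
      have hCompval : Comp.val = (bigL : Multiset V) := by
        rw [hComp]
        have : (bigL.toFinset : Finset V).val = (bigL : Multiset V).dedup := rfl
        rw [this, Multiset.dedup_eq_self.2 (by exact_mod_cast hbignodup)]
      have ha₀cl : a₀ ∈ cl := by
        obtain ⟨tl, htl⟩ := hclhead
        rw [htl]; simp
      have hCompne : Comp.Nonempty := ⟨a₀, (hCompmem a₀).2 (Or.inl ha₀cl)⟩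
      have hA'lt : (A \ Comp).card < A.card :=
        Finset.card_lt_card (Finset.sdiff_ssubset hCompsub hCompne)
      have hclosed : ∀ a ∈ A \ Comp, f a ∈ A \ Comp := by
        intro a ha
        rw [Finset.mem_sdiff] at ha ⊢
        obtain ⟨haA, haC⟩ := ha
        refine ⟨hfA a haA, ?_⟩
        intro hfaC
        rcases (hCompmem (f a)).1 hfaC with hfc | ⟨c, hccl, hfaPc⟩
        · -- f a on the cycle
          by_cases haNS : a ∈ NS
          · obtain ⟨y, hycl, hyfa⟩ := hpred (f a) hfc
            have hyNS : y ∈ NS := hclmem y hycl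
            have hfaNS : f a ∈ NS := hclmem _ hfc
            have hag : a ∈ g (f a) :=
              Finset.mem_inter.2 ⟨Finset.mem_filter.2 ⟨haA, rfl⟩, haNS⟩
            have hyg : y ∈ g (f a) :=
              Finset.mem_inter.2 ⟨Finset.mem_filter.2 ⟨hNSsubA hyNS, hyfa⟩, hyNS⟩
            have : a = y := Finset.card_le_one.1 (le_of_eq (F2 _ hfaNS)) a hag y hyg
            exact haC ((hCompmem a).2 (Or.inl (this ▸ hycl)))
          · have : a ∈ P (f a) :=
              Finset.mem_sdiff.2 ⟨Finset.mem_filter.2 ⟨haA, rfl⟩, haNS⟩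
            exact haC ((hCompmem a).2 (Or.inr ⟨f a, hfc, this⟩))
        · -- f a a pendant: impossible since f a is a non-source
          exact hPNS c (f a) hfaPc (F0 a haA)
      have hfib' : ∀ c', ((A \ Comp).filter (fun x => f x = c')).card ≤ 4 := by
        intro c'
        refine le_trans (Finset.card_le_card ?_) (hfib c')
        exact Finset.filter_subset_filter _ Finset.sdiff_subset
      obtain ⟨L', hok', hmul'⟩ := ih (A \ Comp) (by omega) hclosed hfib'
      -- cover the component
      have hokc : cl = [] ∨ (∃ hd tl, cl = hd :: tl ∧ (P hd).Nonempty) ∨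
          (2 ≤ cl.length ∧ ∀ c ∈ cl, P c = ∅) := by
        rcases ha₀prop with hne | hall
        · obtain ⟨tl, htl⟩ := hclhead
          exact Or.inr (Or.inl ⟨a₀, tl, htl, hne⟩)
        · exact Or.inr (Or.inr ⟨by rw [hcllen]; omega,
            fun c hc => hall c (hclmem c hc)⟩)
      obtain ⟨L₀, hok₀, hperm₀⟩ := cover_mixed f P cl.length cl le_rfl hclchain
        (fun c hc => hP3 c (hclmem c hc)) (fun c _ => hPf c) hokc
      refine ⟨L₀ ++ L', ?_, ?_⟩
      · intro s hs
        rcases List.mem_append.1 hs with h | h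
        · exact hok₀ s h
        · exact hok' s h
      · rw [List.flatMap_append]
        push_cast [← Multiset.coe_add]
        have h1 : ((L₀.flatMap fun s => s.1 :: s.2 : List V) : Multiset V) = (bigL : Multiset V) :=
          Multiset.coe_eq_coe.2 hperm₀
        rw [h1, hmul', ← hCompval, Finset.sdiff_val,
          add_tsub_cancel_of_le (Finset.val_le_iff.2 hCompsub)]
end AuxParts

section Part3
variable {V : Type}

def OV (v : V) : MycVert V := Sum.inl v
def CV (v : V) : MycVert V := Sum.inr (Sum.inl v)
def RT : MycVert V := Sum.inr (Sum.inr ())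

variable (G : SimpleGraph V)

def NA (a b : MycVert V) : Prop := ¬ (mycielski G).Adj a b

lemma na_CC (a b : V) : NA G (CV a) (CV b) := fun h => h
lemma na_OO {a b : V} (h : ¬ G.Adj a b) : NA G (OV a) (OV b) := h
lemma na_OC {a b : V} (h : ¬ G.Adj a b) : NA G (OV a) (CV b) := h
lemma na_CO {a b : V} (h : ¬ G.Adj a b) : NA G (CV a) (OV b) := h
lemma na_RO (a : V) : NA G RT (OV a) := fun h => h
lemma na_OR (a : V) : NA G (OV a) RT := fun h => h
lemma na_OC_self (a : V) : NA G (OV a) (CV a) := na_OC G (G.irrefl)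
lemma na_CO_self (a : V) : NA G (CV a) (OV a) := na_CO G (G.irrefl)

def seg : V × List V → List (MycVert V)
  | (c, [l1]) => [CV l1, OV l1, OV c, CV c]
  | (c, [l1, l2]) => [CV l1, OV l1, OV c, OV l2, CV l2, CV c]
  | (c, [l1, l2, l3]) => [CV l1, OV l1, OV c, OV l2, CV l2, CV l3, OV l3, CV c]
  | (c, [l1, l2, l3, l4]) =>
      [CV l1, OV l1, OV c, OV l2, CV l2, CV l3, OV l3, CV c, OV l4, CV l4]
  | (_, _) => []

def fseg : V × List V → List (MycVert V)
  | (c, [l1]) => [OV l1, OV c, CV c, CV l1]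
  | (c, [l1, l2]) => [OV l1, OV c, OV l2, CV l2, CV c, CV l1]
  | (c, [l1, l2, l3]) => [OV l1, OV c, OV l2, CV l2, CV l3, OV l3, CV c, CV l1]
  | (c, [l1, l2, l3, l4]) =>
      [OV l1, OV c, OV l2, CV l2, CV l3, OV l3, CV c, OV l4, CV l4, CV l1]
  | (_, _) => []

/-- shape hypothesis - extract the four cases -/
lemma shape_cases (s : V × List V) (h1 : s.2 ≠ []) (h2 : s.2.length ≤ 4) :
    (∃ c l1, s = (c, [l1])) ∨ (∃ c l1 l2, s = (c, [l1, l2])) ∨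
    (∃ c l1 l2 l3, s = (c, [l1, l2, l3])) ∨ (∃ c l1 l2 l3 l4, s = (c, [l1, l2, l3, l4])) := by
  obtain ⟨c, ls⟩ := s
  rcases ls with _ | ⟨l1, _ | ⟨l2, _ | ⟨l3, _ | ⟨l4, _ | ⟨l5, t⟩⟩⟩⟩⟩
  · exact absurd rfl h1
  · exact Or.inl ⟨c, l1, rfl⟩
  · exact Or.inr (Or.inl ⟨c, l1, l2, rfl⟩)
  · exact Or.inr (Or.inr (Or.inl ⟨c, l1, l2, l3, rfl⟩))
  · exact Or.inr (Or.inr (Or.inr ⟨c, l1, l2, l3, l4, rfl⟩))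
  · exfalso; simp at h2; omega

lemma seg_chain (s : V × List V) (h1 : s.2 ≠ []) (h2 : s.2.length ≤ 4)
    (hadj : ∀ l ∈ s.2, ¬ G.Adj s.1 l ∧ ¬ G.Adj l s.1) :
    List.IsChain (NA G) (seg s) := by
  rcases shape_cases s h1 h2 with ⟨c, l1, rfl⟩ | ⟨c, l1, l2, rfl⟩ |
    ⟨c, l1, l2, l3, rfl⟩ | ⟨c, l1, l2, l3, l4, rfl⟩ <;>
    simp only [seg, List.isChain_cons_cons, List.isChain_singleton, and_true]
  · exact ⟨na_CO_self G l1, na_OO G (hadj l1 (by simp)).2, na_OC_self G c⟩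
  · exact ⟨na_CO_self G l1, na_OO G (hadj l1 (by simp)).2, na_OO G (hadj l2 (by simp)).1,
      na_OC_self G l2, na_CC G l2 c⟩
  · exact ⟨na_CO_self G l1, na_OO G (hadj l1 (by simp)).2, na_OO G (hadj l2 (by simp)).1,
      na_OC_self G l2, na_CC G l2 l3, na_CO_self G l3, na_OC G (hadj l3 (by simp)).2⟩
  · exact ⟨na_CO_self G l1, na_OO G (hadj l1 (by simp)).2, na_OO G (hadj l2 (by simp)).1,
      na_OC_self G l2, na_CC G l2 l3, na_CO_self G l3, na_OC G (hadj l3 (by simp)).2,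
      na_CO G (hadj l4 (by simp)).1, na_OC_self G l4⟩

lemma fseg_chain (s : V × List V) (h1 : s.2 ≠ []) (h2 : s.2.length ≤ 4)
    (hadj : ∀ l ∈ s.2, ¬ G.Adj s.1 l ∧ ¬ G.Adj l s.1) :
    List.IsChain (NA G) (fseg s) := by
  rcases shape_cases s h1 h2 with ⟨c, l1, rfl⟩ | ⟨c, l1, l2, rfl⟩ |
    ⟨c, l1, l2, l3, rfl⟩ | ⟨c, l1, l2, l3, l4, rfl⟩ <;>
    simp only [fseg, List.isChain_cons_cons, List.isChain_singleton, and_true]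
  · exact ⟨na_OO G (hadj l1 (by simp)).2, na_OC_self G c, na_CC G c l1⟩
  · exact ⟨na_OO G (hadj l1 (by simp)).2, na_OO G (hadj l2 (by simp)).1,
      na_OC_self G l2, na_CC G l2 c, na_CC G c l1⟩
  · exact ⟨na_OO G (hadj l1 (by simp)).2, na_OO G (hadj l2 (by simp)).1,
      na_OC_self G l2, na_CC G l2 l3, na_CO_self G l3, na_OC G (hadj l3 (by simp)).2,
      na_CC G c l1⟩
  · exact ⟨na_OO G (hadj l1 (by simp)).2, na_OO G (hadj l2 (by simp)).1,
      na_OC_self G l2, na_CC G l2 l3, na_CO_self G l3, na_OC G (hadj l3 (by simp)).2,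
      na_CO G (hadj l4 (by simp)).1, na_OC_self G l4, na_CC G l4 l1⟩

lemma seg_head (s : V × List V) (h1 : s.2 ≠ []) (h2 : s.2.length ≤ 4) :
    ∃ a, (seg s).head? = some (CV a) := by
  rcases shape_cases s h1 h2 with ⟨c, l1, rfl⟩ | ⟨c, l1, l2, rfl⟩ |
    ⟨c, l1, l2, l3, rfl⟩ | ⟨c, l1, l2, l3, l4, rfl⟩ <;> exact ⟨l1, rfl⟩

lemma seg_last (s : V × List V) (h1 : s.2 ≠ []) (h2 : s.2.length ≤ 4) :
    ∃ a, (seg s).getLast? = some (CV a) := by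
  rcases shape_cases s h1 h2 with ⟨c, l1, rfl⟩ | ⟨c, l1, l2, rfl⟩ |
    ⟨c, l1, l2, l3, rfl⟩ | ⟨c, l1, l2, l3, l4, rfl⟩
  · exact ⟨c, rfl⟩
  · exact ⟨c, rfl⟩
  · exact ⟨c, rfl⟩
  · exact ⟨l4, rfl⟩

lemma fseg_head (s : V × List V) (h1 : s.2 ≠ []) (h2 : s.2.length ≤ 4) :
    ∃ a, (fseg s).head? = some (OV a) := by
  rcases shape_cases s h1 h2 with ⟨c, l1, rfl⟩ | ⟨c, l1, l2, rfl⟩ |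
    ⟨c, l1, l2, l3, rfl⟩ | ⟨c, l1, l2, l3, l4, rfl⟩ <;> exact ⟨l1, rfl⟩

lemma fseg_last (s : V × List V) (h1 : s.2 ≠ []) (h2 : s.2.length ≤ 4) :
    ∃ a, (fseg s).getLast? = some (CV a) := by
  rcases shape_cases s h1 h2 with ⟨c, l1, rfl⟩ | ⟨c, l1, l2, rfl⟩ |
    ⟨c, l1, l2, l3, rfl⟩ | ⟨c, l1, l2, l3, l4, rfl⟩ <;> exact ⟨l1, rfl⟩

lemma seg_length (s : V × List V) (h1 : s.2 ≠ []) (h2 : s.2.length ≤ 4) :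
    (seg s).length = 2 * (1 + s.2.length) := by
  rcases shape_cases s h1 h2 with ⟨c, l1, rfl⟩ | ⟨c, l1, l2, rfl⟩ |
    ⟨c, l1, l2, l3, rfl⟩ | ⟨c, l1, l2, l3, l4, rfl⟩ <;> rfl

lemma fseg_length (s : V × List V) (h1 : s.2 ≠ []) (h2 : s.2.length ≤ 4) :
    (fseg s).length = 2 * (1 + s.2.length) := by
  rcases shape_cases s h1 h2 with ⟨c, l1, rfl⟩ | ⟨c, l1, l2, rfl⟩ |
    ⟨c, l1, l2, l3, rfl⟩ | ⟨c, l1, l2, l3, l4, rfl⟩ <;> rfl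

lemma seg_mem (s : V × List V) (h1 : s.2 ≠ []) (h2 : s.2.length ≤ 4)
    (v : V) (hv : v = s.1 ∨ v ∈ s.2) : OV v ∈ seg s ∧ CV v ∈ seg s := by
  rcases shape_cases s h1 h2 with ⟨c, l1, rfl⟩ | ⟨c, l1, l2, rfl⟩ |
    ⟨c, l1, l2, l3, rfl⟩ | ⟨c, l1, l2, l3, l4, rfl⟩ <;>
    simp only [seg] <;> simp at hv ⊢ <;> rcases hv with rfl | h <;> simp_all [OV, CV] <;> tauto

lemma fseg_mem (s : V × List V) (h1 : s.2 ≠ []) (h2 : s.2.length ≤ 4)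
    (v : V) (hv : v = s.1 ∨ v ∈ s.2) : OV v ∈ fseg s ∧ CV v ∈ fseg s := by
  rcases shape_cases s h1 h2 with ⟨c, l1, rfl⟩ | ⟨c, l1, l2, rfl⟩ |
    ⟨c, l1, l2, l3, rfl⟩ | ⟨c, l1, l2, l3, l4, rfl⟩ <;>
    simp only [fseg] <;> simp at hv ⊢ <;> rcases hv with rfl | h <;> simp_all [OV, CV] <;> tauto

end Part3

section Assembly
variable {V : Type} (G : SimpleGraph V)

def mycBody (L : List (V × List V)) : List (MycVert V) := L.flatMap seg

lemma mycBody_chain : ∀ (L : List (V × List V)),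
    (∀ s ∈ L, s.2 ≠ [] ∧ s.2.length ≤ 4 ∧ ∀ l ∈ s.2, ¬G.Adj s.1 l ∧ ¬G.Adj l s.1) →
    List.IsChain (NA G) (mycBody L) ∧ (L = [] ∨ ∃ a, (mycBody L).head? = some (CV a)) := by
  intro L
  induction L with
  | nil => intro _; exact ⟨List.isChain_nil, Or.inl rfl⟩
  | cons s L' ih =>
    intro hok
    obtain ⟨h1, h2, h3⟩ := hok s (by simp)
    have ih' := ih (fun t ht => hok t (by simp [ht]))
    have hchain : List.IsChain (NA G) (seg s) := seg_chain G s h1 h2 h3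
    constructor
    · show List.IsChain (NA G) (seg s ++ mycBody L')
      rw [List.isChain_append]
      refine ⟨hchain, ih'.1, ?_⟩
      intro x hx y hy
      obtain ⟨a, ha⟩ := seg_last s h1 h2
      rw [ha] at hx
      simp only [Option.mem_some_iff] at hx
      subst hx
      rcases ih'.2 with hL' | ⟨b, hb⟩
      · subst hL'
        simp [mycBody] at hy
      · rw [hb] at hy
        simp only [Option.mem_some_iff] at hy
        subst hy
        exact na_CC G a b
    · right
      obtain ⟨a, ha⟩ := seg_head s h1 h2
      refine ⟨a, ?_⟩
      show (seg s ++ mycBody L').head? = _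
      rw [List.head?_append, ha]
      rfl

lemma mycBody_length : ∀ (L : List (V × List V)),
    (∀ s ∈ L, s.2 ≠ [] ∧ s.2.length ≤ 4) →
    (mycBody L).length = 2 * (L.flatMap fun s => s.1 :: s.2).length := by
  intro L
  induction L with
  | nil => intro _; rfl
  | cons s L' ih =>
    intro hok
    obtain ⟨h1, h2⟩ := hok s (by simp)
    have ih' := ih (fun t ht => hok t (by simp [ht]))
    show (seg s ++ mycBody L').length = _
    rw [List.length_append, seg_length s h1 h2, ih']
    simp only [List.flatMap_cons, List.length_append, List.length_cons]
    omega

end Assembly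

open scoped Classical in
/-- For a graph `G` of order `n` with maximum degree `Δ ≤ n - 2` and minimum degree `δ`:
if `3(n-1) + δ ≥ 4Δ`, then `λ(M(G)) ≤ 2n`. -/
theorem lambdaNumber_mycielski_of_degree_condition {V : Type} [Fintype V] (G : SimpleGraph V)
    (n : ℕ) (hn : Fintype.card V = n) (hΔ : G.maxDegree ≤ n - 2)
    (h : 4 * G.maxDegree ≤ 3 * (n - 1) + G.minDegree) :
    lambdaNumber (mycielski G) ≤ 2 * n := by
  classical
  have key : ∀ (l : List (MycVert V)), (∀ x, x ∈ l) → l.length ≤ 2 * n + 1 →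
      l.IsChain (fun a b => ¬ (mycielski G).Adj a b) → lambdaNumber (mycielski G) ≤ 2 * n := by
    intro l hm hl hc
    unfold lambdaNumber IsL21Labeling
    exact lambda_le_of_list (mycielski G) l (2 * n) hm hl hc
  rcases Nat.lt_or_ge n 1 with h0 | h1
  · -- n = 0
    have hn0 : n = 0 := by omega
    subst hn0
    have hVempty : IsEmpty V := by
      rw [← Fintype.card_eq_zero_iff]
      exact hn
    apply key [RT]
    · intro x
      rcases x with v | v | u
      · exact (hVempty.false v).elim
      · exact (hVempty.false v).elim
      · cases u
        exact List.mem_singleton.2 rfl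
    · simp
    · simp
  rcases Nat.lt_or_ge n 2 with h1' | h2
  · -- n = 1
    have hn1 : n = 1 := by omega
    subst hn1
    obtain ⟨v, hv⟩ := Fintype.card_eq_one_iff.1 hn
    apply key [CV v, OV v, RT]
    · intro x
      rcases x with w | w | u
      · rw [hv w]
        simp [OV, CV, RT]
      · rw [hv w]
        simp [OV, CV, RT]
      · cases u
        simp [OV, CV, RT]
    · simp
    · simp only [List.isChain_cons_cons, List.isChain_singleton, and_true]
      exact ⟨na_CO_self G v, na_OR G v⟩
  -- main case : n ≥ 2
  letI : DecidableRel G.Adj := Classical.decRel _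
  obtain ⟨φ, hφ1, hφ2, hφ3⟩ := exists_phi G n hn h2 hΔ h
  obtain ⟨L, hLok, hLval⟩ := star_partition φ hφ2 Finset.univ.card Finset.univ le_rfl
    (fun a _ => Finset.mem_univ _) hφ3
  have hLsz : ∀ s ∈ L, s.2 ≠ [] ∧ s.2.length ≤ 4 ∧
      ∀ l ∈ s.2, ¬G.Adj s.1 l ∧ ¬G.Adj l s.1 := by
    intro s hs
    obtain ⟨hne, hle, hleaf⟩ := hLok s hs
    refine ⟨hne, hle, ?_⟩
    intro l hl
    rcases hleaf l hl with hcase | hcase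
    · constructor
      · intro hadj
        exact hφ1 l (by rw [hcase]; exact G.adj_symm hadj)
      · intro hadj
        exact hφ1 l (by rw [hcase]; exact hadj)
    · constructor
      · intro hadj
        exact hφ1 s.1 (by rw [hcase]; exact hadj)
      · intro hadj
        exact hφ1 s.1 (by rw [hcase]; exact G.adj_symm hadj)
  have hmemL : ∀ v : V, ∃ s ∈ L, v = s.1 ∨ v ∈ s.2 := by
    intro v
    have hv : v ∈ (L.flatMap fun s => s.1 :: s.2) := by
      have h1 : v ∈ (Finset.univ : Finset V).val := Finset.mem_univ v
      rw [← hLval] at h1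
      exact Multiset.mem_coe.1 h1
    obtain ⟨s, hs, hvs⟩ := List.mem_flatMap.1 hv
    refine ⟨s, hs, ?_⟩
    rcases List.mem_cons.1 hvs with h | h
    · exact Or.inl h
    · exact Or.inr h
  have hlenL : (L.flatMap fun s => s.1 :: s.2).length = n := by
    have h1 := congrArg Multiset.card hLval
    rw [Multiset.coe_card] at h1
    rw [h1]
    show Finset.univ.card = n
    rw [Finset.card_univ, hn]
  rcases L with _ | ⟨s₀, rest⟩
  · exfalso
    simp at hlenL
    omega
  obtain ⟨h1s, h2s, h3s⟩ := hLsz s₀ (by simp)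
  apply key (RT :: (fseg s₀ ++ mycBody rest))
  · -- membership
    intro x
    have hmm : ∀ v : V, OV v ∈ fseg s₀ ++ mycBody rest ∧ CV v ∈ fseg s₀ ++ mycBody rest := by
      intro v
      obtain ⟨s, hs, hvs⟩ := hmemL v
      rcases List.mem_cons.1 hs with rfl | hsrest
      · have hmem2 := fseg_mem s h1s h2s v hvs
        exact ⟨List.mem_append.2 (Or.inl hmem2.1), List.mem_append.2 (Or.inl hmem2.2)⟩
      · obtain ⟨t1, t2, _⟩ := hLsz s (by simp [hsrest])
        have hmem2 := seg_mem s t1 t2 v hvs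
        constructor
        · exact List.mem_append.2 (Or.inr (List.mem_flatMap.2 ⟨s, hsrest, hmem2.1⟩))
        · exact List.mem_append.2 (Or.inr (List.mem_flatMap.2 ⟨s, hsrest, hmem2.2⟩))
    rcases x with v | v | u
    · exact List.mem_cons.2 (Or.inr (hmm v).1)
    · exact List.mem_cons.2 (Or.inr (hmm v).2)
    · cases u
      exact List.mem_cons.2 (Or.inl rfl)
  · -- length
    have hb := mycBody_length rest
      (fun s hs => ⟨(hLsz s (by simp [hs])).1, (hLsz s (by simp [hs])).2.1⟩)
    have hf := fseg_length s₀ h1s h2s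
    simp only [List.length_cons, List.length_append]
    rw [hf, hb]
    have hsum : (1 + s₀.2.length) + (rest.flatMap fun s => s.1 :: s.2).length = n := by
      rw [← hlenL]
      simp only [List.flatMap_cons, List.length_append, List.length_cons]
      omega
    omega
  · -- chain
    have hbc := mycBody_chain G rest (fun s hs => hLsz s (by simp [hs]))
    have hfc := fseg_chain G s₀ h1s h2s h3s
    rw [List.isChain_cons]
    constructor
    · intro y hy
      rw [List.head?_append] at hy
      obtain ⟨a, ha⟩ := fseg_head s₀ h1s h2s
      rw [ha] at hy
      have hy' : OV a = y := by
        simpa using hy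
      subst hy'
      exact na_RO G a
    · rw [List.isChain_append]
      refine ⟨hfc, hbc.1, ?_⟩
      intro x hx y hy
      obtain ⟨a, ha⟩ := fseg_last s₀ h1s h2s
      rw [ha] at hx
      simp only [Option.mem_some_iff] at hx
      subst hx
      rcases hbc.2 with hrest | ⟨b, hb⟩
      · subst hrest
        simp [mycBody] at hy
      · rw [hb] at hy
        simp only [Option.mem_some_iff] at hy
        subst hy
        exact na_CC G a b
end
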